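/- arXiv:2209.07860 — 3 statements merged into one kernel-verified Lean document; each statement's English description precedes it below -/
import Mathlib

section
/- Let (G, L, c, r, e_r) be a rooted WRAP instance with a non-shortenable directed WRAP solution F⃗, let v ∈ V \ {r}, and let 𝒳_v be a finite set of pairwise disjoint festoons whose festoon intervals {I_X : X ∈ 𝒳_v} form a laminar family, such that 𝒳_v connects v to a v-good vertex but no proper subset of 𝒳_v connects v to a v-good vertex. Then the festoons in 𝒳_v can be numbered X_1, X_2, …, X_p with X_1 ≺ X_2 ≺ … ≺ X_p (i.e., I_{X_1} ⊊ I_{X_2} ⊊ … ⊊ I_{X_p}); moreover, (1) X_i and X_j are tangled if and only if |i − j| = 1, (2) X_1 is the only festoon in 𝒳_v containing a link incident to v, and (3) X_p is the only festoon in 𝒳_v containing a link incident to a v-good vertex. -/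
/-!
Common definitions for the Weighted Ring Augmentation Problem (WRAP).

A rooted WRAP instance `(G, L, c, r, e_r)` has a ring graph `G` whose
vertices we identify with `Fin n`, numbered `r = 0, 1, …, n-1` in the order
in which they appear along the path `(V, E \ {e_r})` starting at the root
`r = 0`.  Vertex `i` is to the left of `j` iff `i < j`.
-/

/-- An undirected link: an unordered pair of distinct vertices of the ring,
recorded via its left endpoint `lo` and its right endpoint `hi`. -/
structure Link (n : ℕ) where
  lo : Fin n
  hi : Fin n
  lo_lt_hi : lo < hi

instance {n : ℕ} : DecidableEq (Link n) := fun a b =>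
  decidable_of_iff (a.lo = b.lo ∧ a.hi = b.hi) (by cases a; cases b; simp)

/-- A directed link: an ordered pair of distinct vertices. -/
structure DLink (n : ℕ) where
  tail : Fin n
  head : Fin n
  ne : tail ≠ head

instance {n : ℕ} : DecidableEq (DLink n) := fun a b =>
  decidable_of_iff (a.tail = b.tail ∧ a.head = b.head) (by cases a; cases b; simp)

variable {n : ℕ}

/-- The underlying undirected link of a directed link. -/
def DLink.toLink (d : DLink n) : Link n :=
  ⟨min d.tail d.head, max d.tail d.head, min_lt_max.mpr d.ne⟩

/-- `ℓ` is incident to `v`. -/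
def Link.Incident (ℓ : Link n) (v : Fin n) : Prop := ℓ.lo = v ∨ ℓ.hi = v

/-- The 2-cuts `C_G` of the ring: the nonempty intervals of consecutive
vertices along the path `(V, E \ {e_r})` that do not contain the root `0`. -/
def IsCut [NeZero n] (C : Finset (Fin n)) : Prop :=
  ∃ a b : Fin n, 0 < a ∧ a ≤ b ∧ C = Finset.Icc a b

/-- `ℓ` has exactly one endpoint in `C`. -/
def crossesCut (ℓ : Link n) (C : Finset (Fin n)) : Prop :=
  (ℓ.lo ∈ C ∧ ℓ.hi ∉ C) ∨ (ℓ.lo ∉ C ∧ ℓ.hi ∈ C)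

instance (ℓ : Link n) (C : Finset (Fin n)) : Decidable (crossesCut ℓ C) := by
  unfold crossesCut; infer_instance

/-- `δ_K(C)`: the links of `K` with exactly one endpoint in `C`. -/
def cutLinks (K : Finset (Link n)) (C : Finset (Fin n)) : Finset (Link n) :=
  K.filter (fun ℓ => crossesCut ℓ C)

/-- An (undirected) WRAP solution: every 2-cut is covered by some link. -/
def IsSolution [NeZero n] (S : Finset (Link n)) : Prop :=
  ∀ C : Finset (Fin n), IsCut C → (cutLinks S C).Nonempty

/-- A directed link covers a 2-cut if it enters it. -/
def DCovers (d : DLink n) (C : Finset (Fin n)) : Prop := d.tail ∉ C ∧ d.head ∈ C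

/-- A directed WRAP solution: every 2-cut is entered by some directed link. -/
def IsDirSolution [NeZero n] (F : Finset (DLink n)) : Prop :=
  ∀ C : Finset (Fin n), IsCut C → ∃ d ∈ F, DCovers d C

/-- `d'` is a shortening of `d`: same head, and the tail of `d'` lies on the
unique path between the endpoints of `d` in `(V, E \ {e_r})`. -/
def IsShortening (d' d : DLink n) : Prop :=
  d'.head = d.head ∧ min d.tail d.head ≤ d'.tail ∧ d'.tail ≤ max d.tail d.head

/-- A non-shortenable directed WRAP solution: deleting any link, or replacing
any link by a strict shortening of it, destroys feasibility. -/
def NonShortenable [NeZero n] (F : Finset (DLink n)) : Prop :=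
  IsDirSolution F ∧
    (∀ d ∈ F, ¬ IsDirSolution (F.erase d)) ∧
    (∀ d ∈ F, ∀ d' : DLink n, IsShortening d' d → d' ≠ d →
      ¬ IsDirSolution (insert d' (F.erase d)))

/-- `d` is a shadow of the undirected link `ℓ`: a shortening of one of the two
orientations of `ℓ`. -/
def IsShadow (d : DLink n) (ℓ : Link n) : Prop :=
  (d.head = ℓ.lo ∨ d.head = ℓ.hi) ∧ ℓ.lo ≤ d.tail ∧ d.tail ≤ ℓ.hi

/-- `u` is a descendant of `v` in `(V, F)` (every vertex is a descendant of
itself). -/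
def Descend (F : Finset (DLink n)) (v u : Fin n) : Prop :=
  Relation.ReflTransGen (fun a b => ∃ d ∈ F, d.tail = a ∧ d.head = b) v u

/-- `u` is `v`-good: not a descendant of `v` in `(V, F)`. -/
def VGood (F : Finset (DLink n)) (v u : Fin n) : Prop := ¬ Descend F v u

/-- `w` is the least common ancestor of the vertex set `U` in `(V, F)`. -/
def IsLCA (F : Finset (DLink n)) (w : Fin n) (U : Set (Fin n)) : Prop :=
  (∀ u ∈ U, Descend F w u) ∧ ∀ x : Fin n, (∀ u ∈ U, Descend F x u) → Descend F x w

/-- `d = (u,v)` is responsible for the 2-cut `C`: it covers `C` and no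
directed link of `F` on the `r`–`u` path in the arborescence `(V, F)`
(i.e. no link of `F` whose head is an ancestor of `u`) covers `C`. -/
def Responsible [NeZero n] (F : Finset (DLink n)) (d : DLink n)
    (C : Finset (Fin n)) : Prop :=
  IsCut C ∧ DCovers d C ∧
    ∀ d' ∈ F, Descend F d'.head d.tail → ¬ DCovers d' C

/-- `Drop_F(K)`: directed links of `F` all of whose responsible cuts
are covered by `K`. -/
def Drop [NeZero n] (F : Finset (DLink n)) (K : Finset (Link n)) : Set (DLink n) :=
  {d | d ∈ F ∧ ∀ C : Finset (Fin n), Responsible F d C → (cutLinks K C).Nonempty}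

/-- Two links are crossing: their endpoints interleave along the ring. -/
def Crossing (ℓ f : Link n) : Prop :=
  (ℓ.lo < f.lo ∧ f.lo < ℓ.hi ∧ ℓ.hi < f.hi) ∨
  (f.lo < ℓ.lo ∧ ℓ.lo < f.hi ∧ f.hi < ℓ.hi)

/-- Two links intersect: they share an endpoint or cross. -/
def Intersects (ℓ f : Link n) : Prop :=
  (ℓ.lo = f.lo ∨ ℓ.lo = f.hi ∨ ℓ.hi = f.lo ∨ ℓ.hi = f.hi) ∨ Crossing ℓ f

/-- The vertex `u` is connected to the vertex `w` in the link intersection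
graph `H[K]`: there is a path in `H[K]` from a link incident to `u` to a link
incident to `w`. -/
def ConnVert (K : Finset (Link n)) (u w : Fin n) : Prop :=
  ∃ ℓ ∈ K, ∃ f ∈ K, ℓ.Incident u ∧ f.Incident w ∧
    Relation.ReflTransGen (fun a b => a ∈ K ∧ b ∈ K ∧ Intersects a b) ℓ f

/-- The link intersection graph `H[S]` is connected. -/
def ConnLinkSet (S : Finset (Link n)) : Prop :=
  ∀ ℓ ∈ S, ∀ f ∈ S,
    Relation.ReflTransGen (fun a b => a ∈ S ∧ b ∈ S ∧ Intersects a b) ℓ f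

/-- `V(S)`: the vertices incident to a link of `S`. -/
def linkVerts (S : Finset (Link n)) : Set (Fin n) := {v | ∃ ℓ ∈ S, ℓ.Incident v}

/-- A festoon order: the links (listed as `f 0, f 1, …`) form a path in the
link intersection graph visited in this order, with both left endpoints and
right endpoints strictly increasing. -/
def IsFestoonSeq {p : ℕ} (f : Fin p → Link n) : Prop :=
  (∀ i j : Fin p, i < j → (f i).lo < (f j).lo ∧ (f i).hi < (f j).hi) ∧
  (∀ i j : Fin p, (i : ℕ) + 1 = (j : ℕ) → Intersects (f i) (f j)) ∧
  (∀ i j : Fin p, (i : ℕ) + 1 < (j : ℕ) → ¬ Intersects (f i) (f j))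

/-- A festoon: a nonempty link set admitting a festoon order. -/
def IsFestoon (X : Finset (Link n)) : Prop :=
  ∃ p : ℕ, 0 < p ∧ ∃ f : Fin p → Link n,
    IsFestoonSeq f ∧ X = Finset.image f Finset.univ

/-- The festoon interval `I_X`: the interval from the leftmost endpoint of a
link of `X` to the rightmost endpoint of a link of `X`. -/
def festoonIval (X : Finset (Link n)) : Set (Fin n) :=
  {w | (∃ ℓ ∈ X, ℓ.lo ≤ w) ∧ ∃ ℓ ∈ X, w ≤ ℓ.hi}

/-- Two festoons are tangled: some link of one intersects some link of the
other. -/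
def Tangled (X Y : Finset (Link n)) : Prop :=
  ∃ ℓ ∈ X, ∃ f ∈ Y, Intersects ℓ f

/-- A laminar family of vertex sets: any two members are nested or disjoint. -/
def Laminar (𝓛 : Set (Finset (Fin n))) : Prop :=
  ∀ A ∈ 𝓛, ∀ B ∈ 𝓛, A ⊆ B ∨ B ⊆ A ∨ Disjoint A B

/-- An inclusion-wise maximal laminar subfamily of `C_G`. -/
def MaxLaminarCuts [NeZero n] (𝓛 : Set (Finset (Fin n))) : Prop :=
  (∀ C ∈ 𝓛, IsCut C) ∧ Laminar 𝓛 ∧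
    ∀ C : Finset (Fin n), IsCut C → C ∉ 𝓛 → ¬ Laminar (insert C 𝓛)

/-- An `α`-thin link set. -/
def IsThin [NeZero n] (α : ℕ) (K : Finset (Link n)) : Prop :=
  ∃ 𝓛 : Set (Finset (Fin n)), MaxLaminarCuts 𝓛 ∧ ∀ C ∈ 𝓛, (cutLinks K C).card ≤ α

/-- The set `𝒳` of festoons connects `v` to a `v`-good vertex. -/
def ConnectsToGood (F : Finset (DLink n)) (v : Fin n)
    (𝒳 : Finset (Finset (Link n))) : Prop :=
  ∃ w : Fin n, VGood F v w ∧ ConnVert (𝒳.biUnion id) v w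

/-- The undirected graph obtained from a set of directed links by
disregarding orientations. -/
def undirGraph (F : Finset (DLink n)) : SimpleGraph (Fin n) where
  Adj a b := ∃ d ∈ F, (d.tail = a ∧ d.head = b) ∨ (d.tail = b ∧ d.head = a)
  symm := by
    constructor
    rintro a b ⟨d, hd, h⟩
    exact ⟨d, hd, h.symm⟩
  loopless := by
    constructor
    rintro a ⟨d, hd, h⟩
    rcases h with ⟨h1, h2⟩ | ⟨h1, h2⟩ <;> exact d.ne (h1.trans h2.symm)

/-- A directed link going to the left along the ring. -/
def LeftGoing (d : DLink n) : Prop := d.head < d.tail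

/-- A directed link going to the right along the ring. -/
def RightGoing (d : DLink n) : Prop := d.tail < d.head

section PartI
set_option maxHeartbeats 1000000

open Relation

variable {n : ℕ}

lemma zero_not_mem_cut {m : ℕ} [NeZero m] {C : Finset (Fin m)} (hC : IsCut C) :
    (0 : Fin m) ∉ C := by
  obtain ⟨a, b, ha, hab, rfl⟩ := hC
  simp only [Finset.mem_Icc]
  rintro ⟨h1, -⟩
  exact ha.not_ge h1

/-- From failure of a shortening, extract the bad cut. -/
lemma exists_bad_cut {F : Finset (DLink (n + 3))} (hF : NonShortenable F)
    {d e' : DLink (n + 3)} (hd : d ∈ F) (hsh : IsShortening e' d) (hne : e' ≠ d) :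
    ∃ C : Finset (Fin (n + 3)), IsCut C ∧ DCovers d C ∧ e'.tail ∈ C ∧
      ∀ d' ∈ F, d' ≠ d → d'.head ∈ C → d'.tail ∈ C := by
  have hnot := hF.2.2 d hd e' hsh hne
  rw [IsDirSolution] at hnot
  push_neg at hnot
  obtain ⟨C, hCcut, hCun⟩ := hnot
  have hcov : DCovers d C := by
    obtain ⟨d3, hd3, hcov3⟩ := hF.1 C hCcut
    by_cases h : d3 = d
    · exact h ▸ hcov3
    · exact absurd hcov3 (hCun d3 (Finset.mem_insert_of_mem (Finset.mem_erase.mpr ⟨h, hd3⟩)))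
  refine ⟨C, hCcut, hcov, ?_, ?_⟩
  · have h1 := hCun e' (Finset.mem_insert_self _ _)
    by_contra h2
    exact h1 ⟨h2, by rw [hsh.1]; exact hcov.2⟩
  · intro d' hd' hne' hh
    have h1 := hCun d' (Finset.mem_insert_of_mem (Finset.mem_erase.mpr ⟨hne', hd'⟩))
    by_contra h2
    exact h1 ⟨h2, hh⟩

lemma reach_root {F : Finset (DLink (n + 3))} (hF : NonShortenable F) :
    ∀ z : Fin (n + 3), Descend F 0 z := by
  by_contra hcon
  push_neg at hcon
  classical
  set A : Finset (Fin (n + 3)) := Finset.univ.filter (fun y => ¬ Descend F 0 y) with hA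
  obtain ⟨z, hz⟩ := hcon
  have hmemA : ∀ y, y ∈ A ↔ ¬ Descend F 0 y := by
    intro y; simp [hA]
  have hAne : A.Nonempty := ⟨z, (hmemA z).mpr hz⟩
  have h0A : (0 : Fin (n + 3)) ∉ A := by
    rw [hmemA]; exact not_not.mpr Relation.ReflTransGen.refl
  have hclose : ∀ d ∈ F, d.head ∈ A → d.tail ∈ A := by
    intro d hd hh
    by_contra ht
    rw [hmemA] at ht hh
    exact hh ((not_not.mp ht).tail ⟨d, hd, rfl, rfl⟩)
  obtain ⟨μ, hμA, hμle⟩ : ∃ μ ∈ A, ∀ y ∈ A, μ ≤ y :=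
    ⟨A.min' hAne, A.min'_mem hAne, fun y hy => A.min'_le y hy⟩
  obtain ⟨ν, hνA, hνge⟩ : ∃ ν ∈ A, ∀ y ∈ A, y ≤ ν :=
    ⟨A.max' hAne, A.max'_mem hAne, fun y hy => A.le_max' y hy⟩
  have hμpos : 0 < μ := Fin.pos_of_ne_zero (fun h => h0A (h ▸ hμA))
  have hcutD : IsCut (Finset.Icc μ ν) := ⟨μ, ν, hμpos, hμle ν hνA, rfl⟩
  obtain ⟨d, hdF, hdcov⟩ := hF.1 _ hcutD
  have hdtA : d.tail ∉ A := fun h =>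
    hdcov.1 (Finset.mem_Icc.mpr ⟨hμle _ h, hνge _ h⟩)
  have hdhA : d.head ∉ A := fun h => hdtA (hclose d hdF h)
  have hG'ne : ((Finset.Icc μ ν).filter (fun y => y ∉ A)).Nonempty :=
    ⟨d.head, by simp only [Finset.mem_filter]; exact ⟨hdcov.2, hdhA⟩⟩
  obtain ⟨gm, hgmG, hgmle⟩ : ∃ gm ∈ (Finset.Icc μ ν).filter (fun y => y ∉ A),
      ∀ y ∈ (Finset.Icc μ ν).filter (fun y => y ∉ A), gm ≤ y :=
    ⟨_, Finset.min'_mem _ hG'ne, fun y hy => Finset.min'_le _ y hy⟩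
  have hgmIcc : gm ∈ Finset.Icc μ ν := (Finset.mem_filter.mp hgmG).1
  have hgmA : gm ∉ A := (Finset.mem_filter.mp hgmG).2
  have hμgm : μ < gm :=
    lt_of_le_of_ne (Finset.mem_Icc.mp hgmIcc).1 (fun h => hgmA (h ▸ hμA))
  have hgmval : 1 ≤ (gm : ℕ) := by
    have := hμgm; rw [Fin.lt_def] at this; omega
  set b0 : Fin (n + 3) := ⟨(gm : ℕ) - 1, by omega⟩ with hb0
  have hmemI : ∀ y : Fin (n + 3), y ∈ Finset.Icc μ b0 ↔ μ ≤ y ∧ y < gm := by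
    intro y
    rw [Finset.mem_Icc]
    constructor
    · rintro ⟨h1, h2⟩
      refine ⟨h1, ?_⟩
      rw [Fin.le_def] at h2; rw [Fin.lt_def]; simp only [hb0] at h2 ⊢; omega
    · rintro ⟨h1, h2⟩
      refine ⟨h1, ?_⟩
      rw [Fin.lt_def] at h2; rw [Fin.le_def]; simp only [hb0]; omega
  have hcutI : IsCut (Finset.Icc μ b0) := by
    refine ⟨μ, b0, hμpos, ?_, rfl⟩
    rw [Fin.le_def]; simp only [hb0]
    rw [Fin.lt_def] at hμgm; omega
  have hIA : ∀ y, y ∈ Finset.Icc μ b0 → y ∈ A := by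
    intro y hy
    rw [hmemI] at hy
    by_contra hyA
    have hyν : y ≤ ν := le_trans hy.2.le (Finset.mem_Icc.mp hgmIcc).2
    have hyG : y ∈ (Finset.Icc μ ν).filter (fun y => y ∉ A) := by
      rw [Finset.mem_filter]
      exact ⟨Finset.mem_Icc.mpr ⟨hy.1, hyν⟩, hyA⟩
    exact absurd (hgmle y hyG) (not_le.mpr hy.2)
  obtain ⟨d2, hd2F, hd2cov⟩ := hF.1 _ hcutI
  have hd2hA : d2.head ∈ A := hIA _ hd2cov.2
  have hd2tA : d2.tail ∈ A := hclose d2 hd2F hd2hA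
  have hd2h_lt : d2.head < gm := ((hmemI _).mp hd2cov.2).2
  have hd2t_gt : gm < d2.tail := by
    have h1 : d2.tail ∈ Finset.Icc μ ν :=
      Finset.mem_Icc.mpr ⟨hμle _ hd2tA, hνge _ hd2tA⟩
    have h2 : ¬ (d2.tail < gm) := fun h =>
      hd2cov.1 ((hmemI _).mpr ⟨(Finset.mem_Icc.mp h1).1, h⟩)
    have h3 : d2.tail ≠ gm := fun h => hgmA (h ▸ hd2tA)
    exact lt_of_le_of_ne (not_lt.mp h2) (Ne.symm h3)
  have hneq : d2.head ≠ gm := ne_of_lt hd2h_lt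
  refine absurd ?_ ((hmemA d2.head).mp hd2hA)
  let e' : DLink (n + 3) := ⟨gm, d2.head, hneq.symm⟩
  have hsh : IsShortening e' d2 := by
    refine ⟨rfl, ?_, ?_⟩
    · exact le_trans (min_le_right _ _) hd2h_lt.le
    · exact le_trans hd2t_gt.le (le_max_left _ _)
  have hne : e' ≠ d2 := by
    intro h
    exact (ne_of_lt hd2t_gt) (congrArg DLink.tail h)
  obtain ⟨C, hCcut, hCcov, hgmC, hstar⟩ := exists_bad_cut hF hd2F hsh hne
  have h0C : (0 : Fin (n + 3)) ∉ C := zero_not_mem_cut hCcut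
  have key : ∀ z : Fin (n + 3), Descend F 0 z → z ∈ C → Descend F 0 d2.head := by
    intro z hz
    induction hz with
    | refl => intro h0; exact absurd h0 h0C
    | @tail x y hxz hstep ih =>
      intro hyC
      obtain ⟨d4, hd4, htl, hhd⟩ := hstep
      by_cases hde : d4 = d2
      · have hy : Descend F 0 y := hxz.tail ⟨d4, hd4, htl, hhd⟩
        rw [show d2.head = y from hde ▸ hhd]
        exact hy
      · have : d4.tail ∈ C := hstar d4 hd4 hde (hhd ▸ hyC)
        exact ih (htl ▸ this)
  have hgmD : Descend F 0 gm := by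
    by_contra hgg
    exact hgmA ((hmemA gm).mpr hgg)
  exact key gm hgmD hgmC

end PartI
section PartIb
set_option maxHeartbeats 1000000
open Relation

variable {n : ℕ}

lemma cross_right {F : Finset (DLink (n + 3))} {v w : Fin (n + 3)}
    (hw : ¬ Descend F v w) (hvw : v < w) :
    ∀ y, Descend F v y → w < y →
      ∃ d ∈ F, Descend F v d.head ∧ min d.tail d.head < w ∧ w < max d.tail d.head := by
  intro y hy
  induction hy with
  | refl => intro h; exact absurd h (lt_asymm hvw)
  | @tail x y hxz hstep ih =>
    intro hwy
    obtain ⟨d, hd, htl, hhd⟩ := hstep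
    rcases lt_trichotomy d.tail w with h1 | h1 | h1
    · refine ⟨d, hd, ?_, ?_, ?_⟩
      · have hdy := hxz.tail ⟨d, hd, htl, hhd⟩
        rwa [hhd]
      · exact lt_of_le_of_lt (min_le_left _ _) h1
      · exact lt_of_lt_of_le (hhd ▸ hwy) (le_max_right _ _)
    · refine absurd ?_ hw
      rw [← h1, htl]; exact hxz
    · exact ih (htl ▸ h1)

lemma cross_left {F : Finset (DLink (n + 3))} {v w : Fin (n + 3)}
    (hw : ¬ Descend F v w) (hvw : w < v) :
    ∀ y, Descend F v y → y < w →
      ∃ d ∈ F, Descend F v d.head ∧ min d.tail d.head < w ∧ w < max d.tail d.head := by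
  intro y hy
  induction hy with
  | refl => intro h; exact absurd h (lt_asymm hvw)
  | @tail x y hxz hstep ih =>
    intro hwy
    obtain ⟨d, hd, htl, hhd⟩ := hstep
    rcases lt_trichotomy w d.tail with h1 | h1 | h1
    · refine ⟨d, hd, ?_, ?_, ?_⟩
      · exact hhd ▸ hxz.tail ⟨d, hd, htl, hhd⟩
      · exact lt_of_le_of_lt (min_le_right _ _) (hhd ▸ hwy)
      · exact lt_of_lt_of_le h1 (le_max_left _ _)
    · refine absurd ?_ hw
      rw [h1, htl]; exact hxz
    · exact ih (htl ▸ h1)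

lemma desc_interval {F : Finset (DLink (n + 3))} (hF : NonShortenable F)
    {v a b w : Fin (n + 3)} (ha : Descend F v a) (hb : Descend F v b)
    (h1 : a ≤ w) (h2 : w ≤ b) : Descend F v w := by
  by_contra hw
  have hva : a < w := lt_of_le_of_ne h1 (fun h => hw (h ▸ ha))
  have hvb : w < b := lt_of_le_of_ne h2 (fun h => hw (h.symm ▸ hb))
  have hvw : v ≠ w := fun h => hw (h ▸ Relation.ReflTransGen.refl)
  have harc : ∃ d ∈ F, Descend F v d.head ∧
      min d.tail d.head < w ∧ w < max d.tail d.head := by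
    rcases lt_or_gt_of_ne hvw with h | h
    · exact cross_right hw h b hb hvb
    · exact cross_left hw h a ha hva
  obtain ⟨d, hdF, hdh, hmin, hmax⟩ := harc
  have hwh : w ≠ d.head := fun h => hw (h ▸ hdh)
  have hwt : w ≠ d.tail := by
    intro h
    rcases le_total d.tail d.head with h3 | h3
    · rw [min_eq_left h3] at hmin; exact absurd (h ▸ hmin) (lt_irrefl w)
    · rw [max_eq_left h3] at hmax; exact absurd (h ▸ hmax) (lt_irrefl w)
  refine absurd ?_ hw
  let e' : DLink (n + 3) := ⟨w, d.head, hwh⟩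
  have hsh : IsShortening e' d := ⟨rfl, hmin.le, hmax.le⟩
  have hne : e' ≠ d := fun h => hwt (congrArg DLink.tail h)
  obtain ⟨C, hCcut, hCcov, hwC, hstar⟩ := exists_bad_cut hF hdF hsh hne
  have h0C : (0 : Fin (n + 3)) ∉ C := zero_not_mem_cut hCcut
  have key : ∀ z : Fin (n + 3), Descend F 0 z → z ∈ C → Descend F d.head z := by
    intro z hz
    induction hz with
    | refl => intro h0; exact absurd h0 h0C
    | @tail x y hxz hstep ih =>
      intro hyC
      obtain ⟨d4, hd4, htl, hhd⟩ := hstep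
      by_cases hde : d4 = d
      · rw [show y = d.head from hhd ▸ hde ▸ rfl]
        exact Relation.ReflTransGen.refl
      · exact (ih (htl ▸ hstar d4 hd4 hde (hhd ▸ hyC))).tail ⟨d4, hd4, htl, hhd⟩
  exact hdh.trans (key w (reach_root hF w) hwC)

end PartIb
section PartIIa
set_option maxHeartbeats 1000000
open Relation

variable {m : ℕ}

lemma fin_first_le {p : ℕ} (hp : 0 < p) (i : Fin p) : (⟨0, hp⟩ : Fin p) ≤ i := by
  rw [Fin.le_def]; exact Nat.zero_le _

lemma fin_le_last {p : ℕ} (hp : 0 < p) (i : Fin p) : i ≤ ⟨p - 1, by omega⟩ := by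
  rw [Fin.le_def]; exact Nat.le_pred_of_lt i.isLt

lemma intersects_symm {a b : Link m} (h : Intersects a b) : Intersects b a := by
  rcases h with (h|h|h|h) | (h|h)
  · exact Or.inl (Or.inl h.symm)
  · exact Or.inl (Or.inr (Or.inr (Or.inl h.symm)))
  · exact Or.inl (Or.inr (Or.inl h.symm))
  · exact Or.inl (Or.inr (Or.inr (Or.inr h.symm)))
  · exact Or.inr (Or.inr h)
  · exact Or.inr (Or.inl h)

lemma intersects_self (a : Link m) : Intersects a a := Or.inl (Or.inl rfl)

lemma not_intersects_of_hi_lt (a b : Link m) (h : a.hi < b.lo) : ¬ Intersects a b := by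
  have h1 := a.lo_lt_hi; have h2 := b.lo_lt_hi
  simp only [Intersects, Crossing, Fin.ext_iff, Fin.lt_def] at *
  omega

lemma not_intersects_of_contain (a b : Link m) (h1 : a.lo < b.lo) (h2 : b.hi < a.hi) :
    ¬ Intersects a b := by
  have h3 := a.lo_lt_hi; have h4 := b.lo_lt_hi
  simp only [Intersects, Crossing, Fin.ext_iff, Fin.lt_def] at *
  omega

lemma span_overlap {a b : Link m} (h : Intersects a b) : b.lo ≤ a.hi ∧ a.lo ≤ b.hi := by
  have h1 := a.lo_lt_hi; have h2 := b.lo_lt_hi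
  simp only [Intersects, Crossing, Fin.ext_iff, Fin.lt_def] at *
  rcases h with (h|h|h|h) | (h|h) <;> omega

lemma intersects_common {a b : Link m} (h : Intersects a b) :
    ∃ w, a.lo ≤ w ∧ w ≤ a.hi ∧ b.lo ≤ w ∧ w ≤ b.hi := by
  obtain ⟨h1, h2⟩ := span_overlap h
  exact ⟨max a.lo b.lo, le_max_left _ _,
    max_le a.lo_lt_hi.le h1, le_max_right _ _, max_le h2 b.lo_lt_hi.le⟩

section Seq
variable {p : ℕ} {f : Fin p → Link m}

lemma seq_mono_le (hf : IsFestoonSeq f) {i j : Fin p} (h : i ≤ j) :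
    (f i).lo ≤ (f j).lo ∧ (f i).hi ≤ (f j).hi := by
  rcases eq_or_lt_of_le h with h1 | h1
  · rw [h1]; exact ⟨le_refl _, le_refl _⟩
  · exact ⟨(hf.1 i j h1).1.le, (hf.1 i j h1).2.le⟩

lemma span_cover (hf : IsFestoonSeq f) (hp : 0 < p) {w : Fin m}
    (hw1 : (f ⟨0, hp⟩).lo ≤ w) (hw2 : w ≤ (f ⟨p - 1, by omega⟩).hi) :
    ∃ i, (f i).lo ≤ w ∧ w ≤ (f i).hi := by
  classical
  set S : Finset (Fin p) := Finset.univ.filter (fun i => (f i).lo ≤ w) with hS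
  have hSne : S.Nonempty := ⟨⟨0, hp⟩, by simp [hS, hw1]⟩
  set i0 := S.max' hSne with hi0
  have hi0S : i0 ∈ S := S.max'_mem hSne
  have hi0lo : (f i0).lo ≤ w := by
    have := hi0S; rw [hS, Finset.mem_filter] at this; exact this.2
  by_cases hlast : (i0 : ℕ) = p - 1
  · refine ⟨i0, hi0lo, ?_⟩
    have : i0 = ⟨p - 1, by omega⟩ := Fin.ext hlast
    rw [this] at hi0lo ⊢
    exact hw2
  · have hlt : (i0 : ℕ) + 1 < p := by have := i0.isLt; omega
    set j : Fin p := ⟨(i0 : ℕ) + 1, hlt⟩ with hj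
    have hjS : j ∉ S := by
      intro hjS
      have := S.le_max' j hjS
      rw [← hi0, Fin.le_def] at this
      simp [hj] at this
    have hjlo : w < (f j).lo := by
      rw [hS, Finset.mem_filter] at hjS
      push_neg at hjS
      exact hjS (Finset.mem_univ j)
    have hcons : Intersects (f i0) (f j) := hf.2.1 i0 j rfl
    exact ⟨i0, hi0lo, le_trans hjlo.le (span_overlap hcons).1⟩

end Seq

lemma mem_ival {X : Finset (Link m)} {ℓ : Link m} (hℓ : ℓ ∈ X) {w : Fin m}
    (h1 : ℓ.lo ≤ w) (h2 : w ≤ ℓ.hi) : w ∈ festoonIval X :=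
  ⟨⟨ℓ, hℓ, h1⟩, ⟨ℓ, hℓ, h2⟩⟩

lemma lo_mem_ival {X : Finset (Link m)} {ℓ : Link m} (hℓ : ℓ ∈ X) :
    ℓ.lo ∈ festoonIval X := mem_ival hℓ (le_refl _) ℓ.lo_lt_hi.le

lemma hi_mem_ival {X : Finset (Link m)} {ℓ : Link m} (hℓ : ℓ ∈ X) :
    ℓ.hi ∈ festoonIval X := mem_ival hℓ ℓ.lo_lt_hi.le (le_refl _)

lemma incident_mem_ival {X : Finset (Link m)} {ℓ : Link m} (hℓ : ℓ ∈ X) {u : Fin m}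
    (h : ℓ.Incident u) : u ∈ festoonIval X := by
  rcases h with h | h
  · exact h ▸ lo_mem_ival hℓ
  · exact h ▸ hi_mem_ival hℓ

lemma ival_eq {p : ℕ} {f : Fin p → Link m} (hf : IsFestoonSeq f) (hp : 0 < p) :
    festoonIval (Finset.image f Finset.univ) =
      Set.Icc (f ⟨0, hp⟩).lo (f ⟨p - 1, by omega⟩).hi := by
  ext w
  constructor
  · rintro ⟨⟨ℓ, hℓ, h1⟩, ⟨ℓ', hℓ', h2⟩⟩
    obtain ⟨i, -, rfl⟩ := Finset.mem_image.mp hℓ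
    obtain ⟨j, -, rfl⟩ := Finset.mem_image.mp hℓ'
    constructor
    · exact le_trans (seq_mono_le hf (fin_first_le hp i)).1 h1
    · exact le_trans h2 (seq_mono_le hf (fin_le_last hp j)).2
  · rintro ⟨h1, h2⟩
    exact ⟨⟨f ⟨0, hp⟩, Finset.mem_image_of_mem f (Finset.mem_univ _), h1⟩,
      ⟨f ⟨p - 1, by omega⟩, Finset.mem_image_of_mem f (Finset.mem_univ _), h2⟩⟩

lemma festoon_conn {X : Finset (Link m)} (hX : IsFestoon X) {K : Finset (Link m)}
    (hK : ∀ x ∈ X, x ∈ K) {a b : Link m} (ha : a ∈ X) (hb : b ∈ X) :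
    Relation.ReflTransGen (fun x y => x ∈ K ∧ y ∈ K ∧ Intersects x y) a b := by
  obtain ⟨p, hp, f, hf, rfl⟩ := hX
  have key : ∀ (k : ℕ) (i j : Fin p), (i : ℕ) + k = (j : ℕ) →
      Relation.ReflTransGen (fun x y => x ∈ K ∧ y ∈ K ∧ Intersects x y) (f i) (f j) := by
    intro k
    induction k with
    | zero =>
      intro i j h
      rw [show i = j from Fin.ext (by omega)]
    | succ k ih =>
      intro i j h
      have hjk : (i : ℕ) + k < p := by have := j.isLt; omega
      set j' : Fin p := ⟨(i : ℕ) + k, hjk⟩ with hj'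
      have h1 := ih i j' (by simp [hj'])
      refine h1.tail ?_
      have hm : ∀ i : Fin p, f i ∈ K := fun i =>
        hK _ (Finset.mem_image_of_mem f (Finset.mem_univ _))
      exact ⟨hm j', hm j, hf.2.1 j' j (by simp [hj']; omega)⟩
  obtain ⟨i, -, rfl⟩ := Finset.mem_image.mp ha
  obtain ⟨j, -, rfl⟩ := Finset.mem_image.mp hb
  rcases le_total i j with h | h
  · exact key ((j : ℕ) - (i : ℕ)) i j (by rw [Fin.le_def] at h; omega)
  · have hsym : Symmetric (fun x y : Link m => x ∈ K ∧ y ∈ K ∧ Intersects x y) :=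
      fun x y ⟨h1, h2, h3⟩ => ⟨h2, h1, intersects_symm h3⟩
    exact (letI : Std.Symm (fun x y : Link m => x ∈ K ∧ y ∈ K ∧ Intersects x y) := ⟨hsym⟩;
      Std.Symm.symm (r := Relation.ReflTransGen _) _ _)
      (key ((i : ℕ) - (j : ℕ)) j i (by rw [Fin.le_def] at h; omega))

lemma tangled_symm {X Y : Finset (Link m)} (h : Tangled X Y) : Tangled Y X := by
  obtain ⟨ℓ, hℓ, g, hg, hint⟩ := h
  exact ⟨g, hg, ℓ, hℓ, intersects_symm hint⟩

lemma tangled_ival {X Y : Finset (Link m)} (h : Tangled X Y) :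
    ∃ w, w ∈ festoonIval X ∧ w ∈ festoonIval Y := by
  obtain ⟨ℓ, hℓ, g, hg, hint⟩ := h
  obtain ⟨w, h1, h2, h3, h4⟩ := intersects_common hint
  exact ⟨w, mem_ival hℓ h1 h2, mem_ival hg h3 h4⟩

lemma tangled_of_ival_eq {X Y : Finset (Link m)} (hX : IsFestoon X) (hY : IsFestoon Y)
    (h : festoonIval X = festoonIval Y) : Tangled X Y := by
  obtain ⟨p, hp, f, hf, rfl⟩ := hX
  obtain ⟨q, hq, g, hg, rfl⟩ := hY
  rw [ival_eq hf hp, ival_eq hg hq] at h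
  have h1 : (f ⟨0, hp⟩).lo ∈ Set.Icc (g ⟨0, hq⟩).lo (g ⟨q - 1, by omega⟩).hi := by
    rw [← h]
    exact ⟨le_refl _, le_trans (f ⟨0, hp⟩).lo_lt_hi.le
      (seq_mono_le hf (fin_le_last hp _)).2⟩
  have h2 : (g ⟨0, hq⟩).lo ∈ Set.Icc (f ⟨0, hp⟩).lo (f ⟨p - 1, by omega⟩).hi := by
    rw [h]
    exact ⟨le_refl _, le_trans (g ⟨0, hq⟩).lo_lt_hi.le
      (seq_mono_le hg (fin_le_last hq _)).2⟩
  have : (f ⟨0, hp⟩).lo = (g ⟨0, hq⟩).lo := le_antisymm h2.1 h1.1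
  exact ⟨f ⟨0, hp⟩, Finset.mem_image_of_mem f (Finset.mem_univ _),
    g ⟨0, hq⟩, Finset.mem_image_of_mem g (Finset.mem_univ _), Or.inl (Or.inl this)⟩

end PartIIa
section PartIIb
set_option maxHeartbeats 1000000
open Relation

variable {m : ℕ}

lemma touch_lemma {c b : Link m} (hni : ¬ Intersects c b) :
    (c.hi < b.lo) ∨ (b.hi < c.lo) ∨ (b.lo < c.lo ∧ c.hi < b.hi) ∨
      (c.lo < b.lo ∧ b.hi < c.hi) := by
  by_contra h
  push_neg at h
  obtain ⟨h1, h2, h3, h4⟩ := h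
  apply hni
  rcases lt_trichotomy c.lo b.lo with hx | hx | hx
  · have h5 : c.hi ≤ b.hi := h4 hx
    rcases eq_or_lt_of_le h1 with h6 | h6
    · exact Or.inl (Or.inr (Or.inr (Or.inl h6.symm)))
    · rcases eq_or_lt_of_le h5 with h7 | h7
      · exact Or.inl (Or.inr (Or.inr (Or.inr h7)))
      · exact Or.inr (Or.inl ⟨hx, h6, h7⟩)
  · exact Or.inl (Or.inl hx)
  · have h5 : b.hi ≤ c.hi := h3 hx
    rcases eq_or_lt_of_le h2 with h6 | h6
    · exact Or.inl (Or.inr (Or.inl h6))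
    · rcases eq_or_lt_of_le h5 with h7 | h7
      · exact Or.inl (Or.inr (Or.inr (Or.inr h7.symm)))
      · exact Or.inr (Or.inr ⟨hx, h6, h7⟩)

/-- Category lemma: a link not intersecting any link of a festoon is either
strictly inside one link, strictly around the whole hull, or wholly to one side. -/
lemma category {p : ℕ} {f : Fin p → Link m} (hf : IsFestoonSeq f) (hp : 0 < p)
    {c : Link m} (hni : ∀ i : Fin p, ¬ Intersects c (f i)) :
    (∃ i, (f i).lo < c.lo ∧ c.hi < (f i).hi) ∨
    (c.lo < (f ⟨0, hp⟩).lo ∧ (f ⟨p - 1, by omega⟩).hi < c.hi) ∨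
    (c.hi < (f ⟨0, hp⟩).lo) ∨ ((f ⟨p - 1, by omega⟩).hi < c.lo) := by
  rcases lt_or_ge c.lo (f ⟨0, hp⟩).lo with hlo | hlo
  · -- c.lo left of hull
    rcases lt_or_ge c.hi (f ⟨0, hp⟩).lo with hhi | hhi
    · exact Or.inr (Or.inr (Or.inl hhi))
    · rcases le_or_gt c.hi (f ⟨p - 1, by omega⟩).hi with hhi2 | hhi2
      · exfalso
        obtain ⟨i, hi1, hi2⟩ := span_cover hf hp hhi hhi2
        rcases touch_lemma (hni i) with h | h | h | h
        · exact absurd hi1 (not_le.mpr h)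
        · exact absurd (lt_trans (lt_of_lt_of_le hlo (seq_mono_le hf (fin_first_le hp i)).1)
            (f i).lo_lt_hi) (not_lt.mpr h.le)
        · exact absurd (lt_of_lt_of_le hlo (seq_mono_le hf (fin_first_le hp i)).1)
            (not_lt.mpr h.1.le)
        · exact absurd hi2 (not_le.mpr h.2)
      · exact Or.inr (Or.inl ⟨hlo, hhi2⟩)
  · rcases le_or_gt c.lo (f ⟨p - 1, by omega⟩).hi with hlo2 | hlo2
    · obtain ⟨i, hi1, hi2⟩ := span_cover hf hp hlo hlo2
      rcases touch_lemma (hni i) with h | h | h | h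
      · exact absurd (le_trans hi1 c.lo_lt_hi.le) (not_le.mpr h)
      · exact absurd hi2 (not_le.mpr h)
      · rcases lt_trichotomy c.hi (f i).hi with h5 | h5 | h5
        · exact Or.inl ⟨i, h.1, h5⟩
        · exact absurd (hni i) (fun hq => hq (Or.inl (Or.inr (Or.inr (Or.inr h5)))))
        · exact absurd h5 (not_lt.mpr h.2.le)
      · exact absurd hi1 (not_le.mpr h.1)
    · exact Or.inr (Or.inr (Or.inr hlo2))

/-- Propagation step: if `c` is strictly inside a link of the festoon `g` and
`c'` intersects `c` while not intersecting `g`, then `c'` is also inside. -/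
lemma prop_step {q : ℕ} {g : Fin q → Link m} (hg : IsFestoonSeq g) (hq : 0 < q)
    {c c' : Link m} (hnic' : ∀ i : Fin q, ¬ Intersects c' (g i))
    (hint : Intersects c c') 
    (hins : ∃ k, (g k).lo < c.lo ∧ c.hi < (g k).hi) :
    ∃ k, (g k).lo < c'.lo ∧ c'.hi < (g k).hi := by
  obtain ⟨k, hk1, hk2⟩ := hins
  have hklo : (g ⟨0, hq⟩).lo ≤ (g k).lo := (seq_mono_le hg (fin_first_le hq k)).1
  have hkhi : (g k).hi ≤ (g ⟨q - 1, by omega⟩).hi := (seq_mono_le hg (fin_le_last hq k)).2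
  rcases category hg hq hnic' with h | h | h | h
  · exact h
  · exfalso
    exact not_intersects_of_contain c' c (lt_of_lt_of_le h.1 (le_trans hklo hk1.le))
      (lt_of_le_of_lt (le_trans hk2.le hkhi) h.2) (intersects_symm hint)
  · exfalso
    exact not_intersects_of_hi_lt c' c (lt_of_lt_of_le h (le_trans hklo hk1.le))
      (intersects_symm hint)
  · exfalso
    exact not_intersects_of_hi_lt c c' (lt_of_le_of_lt (le_trans hk2.le hkhi) h) hint

/-- If one link of festoon `f` is strictly inside a link of festoon `g` and the
two festoons are not tangled, then the whole interval of `f` is inside that of `g`. -/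
lemma inside_all {p q : ℕ} {f : Fin p → Link m} {g : Fin q → Link m}
    (hf : IsFestoonSeq f) (hg : IsFestoonSeq g) (hp : 0 < p) (hq : 0 < q)
    (hni : ∀ i j, ¬ Intersects (f i) (g j))
    (hins : ∃ i k, (g k).lo < (f i).lo ∧ (f i).hi < (g k).hi) :
    festoonIval (Finset.image f Finset.univ) ⊆ festoonIval (Finset.image g Finset.univ) := by
  obtain ⟨i0, hi0⟩ := hins
  have hup : ∀ (t : ℕ) (i j : Fin p), (i : ℕ) + t = (j : ℕ) →
      (∃ k, (g k).lo < (f i).lo ∧ (f i).hi < (g k).hi) →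
      (∃ k, (g k).lo < (f j).lo ∧ (f j).hi < (g k).hi) := by
    intro t
    induction t with
    | zero => intro i j h hi; rwa [show j = i from Fin.ext (by omega)]
    | succ t ih =>
      intro i j h hi
      have hjk : (i : ℕ) + t < p := by have := j.isLt; omega
      have h1 := ih i ⟨(i : ℕ) + t, hjk⟩ rfl hi
      exact prop_step hg hq (fun k => hni j k)
        (hf.2.1 ⟨(i : ℕ) + t, hjk⟩ j (by simp; omega)) h1
  have hdown : ∀ (t : ℕ) (i j : Fin p), (j : ℕ) + t = (i : ℕ) →
      (∃ k, (g k).lo < (f i).lo ∧ (f i).hi < (g k).hi) →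
      (∃ k, (g k).lo < (f j).lo ∧ (f j).hi < (g k).hi) := by
    intro t
    induction t with
    | zero => intro i j h hi; rwa [show j = i from Fin.ext (by omega)]
    | succ t ih =>
      intro i j h hi
      have hjk : (j : ℕ) + 1 < p := by have := i.isLt; omega
      have h1 := ih i ⟨(j : ℕ) + 1, hjk⟩ (by simp; omega) hi
      exact prop_step hg hq (fun k => hni j k)
        (intersects_symm (hf.2.1 j ⟨(j : ℕ) + 1, hjk⟩ (by simp))) h1
  have hall : ∀ i, ∃ k, (g k).lo < (f i).lo ∧ (f i).hi < (g k).hi := by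
    intro i
    rcases le_total i0 i with h | h
    · exact hup ((i : ℕ) - (i0 : ℕ)) i0 i (by rw [Fin.le_def] at h; omega) hi0
    · exact hdown ((i0 : ℕ) - (i : ℕ)) i0 i (by rw [Fin.le_def] at h; omega) hi0
  rw [ival_eq hf hp, ival_eq hg hq]
  obtain ⟨k1, hk1, -⟩ := hall ⟨0, hp⟩
  obtain ⟨k2, -, hk2⟩ := hall ⟨p - 1, by omega⟩
  exact Set.Icc_subset_Icc
    (le_trans (seq_mono_le hg (fin_first_le hq k1)).1 hk1.le)
    (le_trans hk2.le (seq_mono_le hg (fin_le_last hq k2)).2)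

/-- The triple exclusion lemma. -/
lemma triple {A B C : Finset (Link m)} (hA : IsFestoon A) (hB : IsFestoon B)
    (hC : IsFestoon C) (hAB : Tangled A B) (hAC : Tangled A C) (hnBC : ¬ Tangled B C)
    (hlamBC : festoonIval B ⊆ festoonIval C ∨ festoonIval C ⊆ festoonIval B ∨
      festoonIval B ∩ festoonIval C = ∅)
    (hIAB : festoonIval A ⊆ festoonIval B) (hIAC : festoonIval A ⊆ festoonIval C) :
    False := by
  obtain ⟨pa, hpa, fa, hfa, hAe⟩ := hA
  have hw0 : (fa ⟨0, hpa⟩).lo ∈ festoonIval A := by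
    rw [hAe]; exact lo_mem_ival (Finset.mem_image_of_mem fa (Finset.mem_univ _))
  obtain ⟨pb, hpb, fb, hfb, hBe⟩ := hB
  obtain ⟨pc, hpc, fc, hfc, hCe⟩ := hC
  have hniBC : ∀ ℓ ∈ B, ∀ f ∈ C, ¬ Intersects ℓ f := by
    intro ℓ hℓ f hf hint
    exact hnBC ⟨ℓ, hℓ, f, hf, hint⟩
  rcases hlamBC with hBC | hCB | hdisj
  · -- I_B ⊆ I_C
    obtain ⟨astar, haA, cstar, hcC, hint⟩ := hAC
    have hnic : ∀ i : Fin pb, ¬ Intersects cstar (fb i) := by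
      intro i hx
      exact hniBC (fb i) (by rw [hBe]; exact Finset.mem_image_of_mem _ (Finset.mem_univ _))
        cstar hcC (intersects_symm hx)
    have haloB : (fb ⟨0, hpb⟩).lo ≤ astar.lo ∧ astar.hi ≤ (fb ⟨pb - 1, by omega⟩).hi := by
      have h1 : astar.lo ∈ festoonIval B := hIAB (by rw [hAe]; exact lo_mem_ival (hAe ▸ haA))
      have h2 : astar.hi ∈ festoonIval B := hIAB (by rw [hAe]; exact hi_mem_ival (hAe ▸ haA))
      rw [hBe, ival_eq hfb hpb] at h1 h2
      exact ⟨h1.1, h2.2⟩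
    rcases category hfb hpb hnic with h | h | h | h
    · -- some link of C inside a link of B : I_C ⊆ I_B, so I_B = I_C, tangled
      obtain ⟨i, hi⟩ := h
      have hCsubB : festoonIval C ⊆ festoonIval B := by
        rw [hBe, hCe]
        refine inside_all hfc hfb hpc hpb ?_ ?_
        · intro i' j' hx
          exact hniBC (fb j')
            (by rw [hBe]; exact Finset.mem_image_of_mem _ (Finset.mem_univ _))
            (fc i') (by rw [hCe]; exact Finset.mem_image_of_mem _ (Finset.mem_univ _))
            (intersects_symm hx)
        · obtain ⟨ic, -, hic⟩ := Finset.mem_image.mp (hCe ▸ hcC)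
          exact ⟨ic, i, by rw [hic]; exact hi⟩
      exact hnBC (tangled_of_ival_eq ⟨pb, hpb, fb, hfb, hBe⟩ ⟨pc, hpc, fc, hfc, hCe⟩ (Set.Subset.antisymm hBC hCsubB))
    · exact not_intersects_of_contain cstar astar (lt_of_lt_of_le h.1 haloB.1)
        (lt_of_le_of_lt haloB.2 h.2) (intersects_symm hint)
    · exact not_intersects_of_hi_lt cstar astar (lt_of_lt_of_le h haloB.1)
        (intersects_symm hint)
    · exact not_intersects_of_hi_lt astar cstar (lt_of_le_of_lt haloB.2 h) hint
  · -- I_C ⊆ I_B : mirror, using A tangled B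
    obtain ⟨acirc, haA, bstar, hbB, hint⟩ := hAB
    have hnic : ∀ i : Fin pc, ¬ Intersects bstar (fc i) := by
      intro i hx
      exact hniBC bstar hbB (fc i)
        (by rw [hCe]; exact Finset.mem_image_of_mem _ (Finset.mem_univ _)) hx
    have haloC : (fc ⟨0, hpc⟩).lo ≤ acirc.lo ∧ acirc.hi ≤ (fc ⟨pc - 1, by omega⟩).hi := by
      have h1 : acirc.lo ∈ festoonIval C := hIAC (lo_mem_ival haA)
      have h2 : acirc.hi ∈ festoonIval C := hIAC (hi_mem_ival haA)
      rw [hCe, ival_eq hfc hpc] at h1 h2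
      exact ⟨h1.1, h2.2⟩
    rcases category hfc hpc hnic with h | h | h | h
    · obtain ⟨i, hi⟩ := h
      have hBsubC : festoonIval B ⊆ festoonIval C := by
        rw [hBe, hCe]
        refine inside_all hfb hfc hpb hpc ?_ ?_
        · intro i' j' hx
          exact hniBC (fb i')
            (by rw [hBe]; exact Finset.mem_image_of_mem _ (Finset.mem_univ _))
            (fc j') (by rw [hCe]; exact Finset.mem_image_of_mem _ (Finset.mem_univ _)) hx
        · obtain ⟨ib, -, hib⟩ := Finset.mem_image.mp (hBe ▸ hbB)
          exact ⟨ib, i, by rw [hib]; exact hi⟩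
      exact hnBC (tangled_of_ival_eq ⟨pb, hpb, fb, hfb, hBe⟩ ⟨pc, hpc, fc, hfc, hCe⟩ (Set.Subset.antisymm hBsubC hCB))
    · exact not_intersects_of_contain bstar acirc (lt_of_lt_of_le h.1 haloC.1)
        (lt_of_le_of_lt haloC.2 h.2) (intersects_symm hint)
    · exact not_intersects_of_hi_lt bstar acirc (lt_of_lt_of_le h haloC.1)
        (intersects_symm hint)
    · exact not_intersects_of_hi_lt acirc bstar (lt_of_le_of_lt haloC.2 h) hint
  · have : (fa ⟨0, hpa⟩).lo ∈ festoonIval B ∩ festoonIval C :=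
      ⟨hIAB hw0, hIAC hw0⟩
    rw [hdisj] at this
    exact this

end PartIIb
section PartIIc
set_option maxHeartbeats 1000000
open Relation

variable {m : ℕ}

lemma fin_mk_eq {P x y : ℕ} (hx : x < P) (hy : y < P) (h : x = y) :
    (⟨x, hx⟩ : Fin P) = ⟨y, hy⟩ := Fin.ext h

lemma fin_cast_eq {P x : ℕ} (j : Fin P) (h : x = (j : ℕ)) (hx : x < P) :
    (⟨x, hx⟩ : Fin P) = j := Fin.ext h

lemma mem_biUnion_of {𝒴 : Finset (Finset (Link m))} {Y : Finset (Link m)} (hY : Y ∈ 𝒴)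
    {x : Link m} (hx : x ∈ Y) : x ∈ 𝒴.biUnion id :=
  Finset.mem_biUnion.mpr ⟨Y, hY, hx⟩

lemma list_chain_connects {𝒴 : Finset (Finset (Link m))} :
    ∀ (M : List (Finset (Link m))) (hne : M ≠ []),
      (∀ Y ∈ M, IsFestoon Y) → (∀ Y ∈ M, Y ∈ 𝒴) → List.Chain' Tangled M →
      ∀ ℓ ∈ M.head hne, ∀ f ∈ M.getLast hne,
      Relation.ReflTransGen
        (fun x y => x ∈ 𝒴.biUnion id ∧ y ∈ 𝒴.biUnion id ∧ Intersects x y) ℓ f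
  | [], hne => absurd rfl hne
  | [Y], _ => by
    intro hfest hmem hch ℓ hℓ f hf
    simp only [List.head_cons, List.getLast_singleton] at hℓ hf
    exact festoon_conn (hfest Y (by simp))
      (fun x hx => mem_biUnion_of (hmem Y (by simp)) hx) hℓ hf
  | Y1 :: Y2 :: rest, _ => by
    intro hfest hmem hch ℓ hℓ f hf
    replace hch := List.isChain_cons_cons.mp hch
    obtain ⟨x, hx, y, hy, hint⟩ := hch.1
    have h1 : Relation.ReflTransGen
        (fun x y => x ∈ 𝒴.biUnion id ∧ y ∈ 𝒴.biUnion id ∧ Intersects x y) ℓ x :=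
      festoon_conn (hfest Y1 (by simp))
        (fun z hz => mem_biUnion_of (hmem Y1 (by simp)) hz) (by simpa using hℓ) hx
    have h2 := list_chain_connects (Y2 :: rest) (by simp)
      (fun Y hY => hfest Y (by simp [hY])) (fun Y hY => hmem Y (by right; exact hY))
      hch.2 y hy f (by rwa [List.getLast_cons (by simp)] at hf)
    exact (h1.tail ⟨mem_biUnion_of (hmem Y1 (by simp)) hx,
      mem_biUnion_of (hmem Y2 (by simp)) hy, hint⟩).trans h2

lemma conn_seg {pn : ℕ} {g : Fin pn → Finset (Link m)}
    (gfest : ∀ i, IsFestoon (g i))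
    (htan : ∀ (k : ℕ) (h2 : k + 1 < pn), Tangled (g ⟨k, by omega⟩) (g ⟨k + 1, h2⟩))
    (𝒴 : Finset (Finset (Link m))) :
    ∀ (t a : ℕ) (h : a + t < pn),
      (∀ (k : ℕ) (hk : k < pn), a ≤ k → k ≤ a + t → g ⟨k, hk⟩ ∈ 𝒴) →
      ∀ ℓ ∈ g ⟨a, by omega⟩, ∀ f ∈ g ⟨a + t, h⟩,
      Relation.ReflTransGen
        (fun x y => x ∈ 𝒴.biUnion id ∧ y ∈ 𝒴.biUnion id ∧ Intersects x y) ℓ f := by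
  intro t
  induction t with
  | zero =>
    intro a h hmem ℓ hℓ f hf
    exact festoon_conn (gfest _)
      (fun z hz => mem_biUnion_of (hmem a h (le_refl _) (by omega)) hz) hℓ hf
  | succ t ih =>
    intro a h hmem ℓ hℓ f hf
    have h' : a + t < pn := by omega
    obtain ⟨x, hx, y, hy, hint⟩ := htan (a + t) (by omega)
    have h1 := ih a h' (fun k hk hk1 hk2 => hmem k hk hk1 (by omega)) ℓ hℓ x hx
    have h2 := festoon_conn (gfest ⟨a + t + 1, by omega⟩)
      (fun z hz => mem_biUnion_of (hmem (a + t + 1) (by omega) (by omega) (by omega)) hz)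
      hy hf
    exact (h1.tail ⟨mem_biUnion_of (hmem (a + t) h' (by omega) (by omega)) hx,
      mem_biUnion_of (hmem (a + t + 1) (by omega) (by omega) (by omega)) hy, hint⟩).trans h2

/-- The tangle graph on festoons of `𝒳`. -/
def tangleGraph (𝒳 : Finset (Finset (Link m))) : SimpleGraph (Finset (Link m)) where
  Adj X Y := X ≠ Y ∧ X ∈ 𝒳 ∧ Y ∈ 𝒳 ∧ Tangled X Y
  symm := ⟨fun X Y ⟨h1, h2, h3, h4⟩ => ⟨h1.symm ∘ Eq.symm ∘ Eq.symm, h3, h2, tangled_symm h4⟩⟩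
  loopless := ⟨fun X h => h.1 rfl⟩

lemma walk_exists {𝒳 : Finset (Finset (Link m))} {a b : Link m}
    (h : Relation.ReflTransGen
      (fun x y => x ∈ 𝒳.biUnion id ∧ y ∈ 𝒳.biUnion id ∧ Intersects x y) a b) :
    ∀ Ya, Ya ∈ 𝒳 → a ∈ Ya → ∀ Yb, Yb ∈ 𝒳 → b ∈ Yb →
      Nonempty ((tangleGraph 𝒳).Walk Ya Yb) := by
  induction h with
  | refl =>
    intro Ya hYa ha Yb hYb hb
    by_cases he : Ya = Yb
    · subst he; exact ⟨SimpleGraph.Walk.nil⟩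
    · exact ⟨SimpleGraph.Walk.cons
        (⟨he, hYa, hYb, ⟨a, ha, a, hb, intersects_self a⟩⟩ :
          (tangleGraph 𝒳).Adj Ya Yb) SimpleGraph.Walk.nil⟩
  | @tail x y hax hstep ih =>
    intro Ya hYa ha Yb hYb hb
    obtain ⟨hxK, hyK, hint⟩ := hstep
    obtain ⟨Yx, hYx, hxYx⟩ := Finset.mem_biUnion.mp hxK
    obtain ⟨W⟩ := ih Ya hYa ha Yx hYx hxYx
    by_cases he : Yx = Yb
    · subst he; exact ⟨W⟩
    · exact ⟨W.concat ⟨he, hYx, hYb, ⟨x, hxYx, y, hb, hint⟩⟩⟩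

lemma walk_support_mem {𝒳 : Finset (Finset (Link m))} :
    ∀ {u v : Finset (Link m)} (W : (tangleGraph 𝒳).Walk u v), u ∈ 𝒳 →
      ∀ Z ∈ W.support, Z ∈ 𝒳 := by
  intro u v W
  induction W with
  | nil =>
    intro hu Z hZ
    rw [SimpleGraph.Walk.support_nil, List.mem_singleton] at hZ
    exact hZ ▸ hu
  | @cons u' v' w' h W ih =>
    intro hu Z hZ
    rw [SimpleGraph.Walk.support_cons] at hZ
    rcases List.mem_cons.mp hZ with rfl | hZ
    · exact hu
    · exact ih h.2.2.1 Z hZ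

end PartIIc

set_option maxHeartbeats 4000000 in
/-- let `F` be a non-shortenable directed WRAP solution,
`v ≠ r`, and `𝒳` a finite set of pairwise disjoint festoons with laminar
festoon intervals that connects `v` to a `v`-good vertex, no proper subset of
which does so.  Then the festoons of `𝒳` can be numbered `X_0 ≺ X_1 ≺ ⋯ ≺
X_{p-1}` (strictly increasing festoon intervals); moreover (1) two distinct
festoons `X_i, X_j` are tangled iff `|i − j| = 1`, (2) `X_0` is the only
festoon of `𝒳` containing a link incident to `v`, and (3) `X_{p-1}` is the
only festoon of `𝒳` containing a link incident to a `v`-good vertex. -/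
theorem minimal_connecting_festoon_chain {n : ℕ}
    (F : Finset (DLink (n + 3))) (hF : NonShortenable F)
    (v : Fin (n + 3)) (hv : v ≠ 0)
    (𝒳 : Finset (Finset (Link (n + 3))))
    (hfest : ∀ X ∈ 𝒳, IsFestoon X)
    (hdisj : ∀ X ∈ 𝒳, ∀ Y ∈ 𝒳, X ≠ Y → Disjoint X Y)
    (hlam : ∀ X ∈ 𝒳, ∀ Y ∈ 𝒳,
      festoonIval X ⊆ festoonIval Y ∨ festoonIval Y ⊆ festoonIval X ∨
        festoonIval X ∩ festoonIval Y = ∅)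
    (hconn : ConnectsToGood F v 𝒳)
    (hmin : ∀ 𝒴 : Finset (Finset (Link (n + 3))), 𝒴 ⊂ 𝒳 →
      ¬ ConnectsToGood F v 𝒴) :
    ∃ p : ℕ, ∃ g : Fin p → Finset (Link (n + 3)),
      𝒳 = Finset.image g Finset.univ ∧
      (∀ i j : Fin p, i < j → festoonIval (g i) ⊂ festoonIval (g j)) ∧
      (∀ i j : Fin p, i ≠ j →
        (Tangled (g i) (g j) ↔ ((i : ℕ) + 1 = (j : ℕ) ∨ (j : ℕ) + 1 = (i : ℕ)))) ∧
      (∀ i : Fin p, (∃ ℓ ∈ g i, Link.Incident ℓ v) ↔ (i : ℕ) = 0) ∧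
      (∀ i : Fin p,
        (∃ ℓ ∈ g i, ∃ u : Fin (n + 3), Link.Incident ℓ u ∧ VGood F v u) ↔
          (i : ℕ) = p - 1) := by
  classical
  obtain ⟨w, hwgood, ℓ0, hℓ0K, f0, hf0K, hℓ0v, hf0w, hpath⟩ := hconn
  obtain ⟨X0, hX0X, hℓ0X0⟩ := Finset.mem_biUnion.mp hℓ0K
  obtain ⟨Xw, hXwX, hf0Xw⟩ := Finset.mem_biUnion.mp hf0K
  obtain ⟨W0⟩ := walk_exists hpath X0 hX0X hℓ0X0 Xw hXwX hf0Xw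
  set lst := (W0.toPath : (tangleGraph 𝒳).Walk X0 Xw).support with hlst
  have hnodup : lst.Nodup := W0.toPath.2.support_nodup
  have hchAdj : List.Chain' (tangleGraph 𝒳).Adj lst :=
    SimpleGraph.Walk.isChain_adj_support _
  have hne : lst ≠ [] := SimpleGraph.Walk.support_ne_nil _
  have hhead : lst.head hne = X0 := SimpleGraph.Walk.head_support _
  have hlastXw : lst.getLast hne = Xw := SimpleGraph.Walk.getLast_support _
  have hsupmem : ∀ Z ∈ lst, Z ∈ 𝒳 :=
    walk_support_mem (W0.toPath : (tangleGraph 𝒳).Walk X0 Xw) hX0X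
  have hchT : List.Chain' Tangled lst := List.IsChain.imp (fun a b h => h.2.2.2) hchAdj
  -- minimality forces every festoon onto the path
  have hall : ∀ Z ∈ 𝒳, Z ∈ lst := by
    intro Z hZ
    by_contra hZlst
    have hss : 𝒳.filter (fun Y => Y ∈ lst) ⊂ 𝒳 :=
      ⟨Finset.filter_subset _ _,
        fun hsup => hZlst (Finset.mem_filter.mp (hsup hZ)).2⟩
    refine hmin _ hss ⟨w, hwgood, ?_⟩
    have hX0Y : X0 ∈ 𝒳.filter (fun Y => Y ∈ lst) :=
      Finset.mem_filter.mpr ⟨hX0X, hhead ▸ List.head_mem hne⟩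
    have hXwY : Xw ∈ 𝒳.filter (fun Y => Y ∈ lst) :=
      Finset.mem_filter.mpr ⟨hXwX, hlastXw ▸ List.getLast_mem hne⟩
    refine ⟨ℓ0, mem_biUnion_of hX0Y hℓ0X0, f0, mem_biUnion_of hXwY hf0Xw, hℓ0v, hf0w, ?_⟩
    exact list_chain_connects lst hne (fun Y hY => hfest Y (hsupmem Y hY))
      (fun Y hY => Finset.mem_filter.mpr ⟨hsupmem Y hY, hY⟩) hchT
      ℓ0 (hhead ▸ hℓ0X0) f0 (hlastXw ▸ hf0Xw)
  -- the enumeration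
  set P := lst.length with hP
  have hP0 : 0 < P := List.length_pos_iff.mpr hne
  set g : Fin P → Finset (Link (n + 3)) := fun i => lst.get i with hg
  have ginj : Function.Injective g := List.nodup_iff_injective_get.mp hnodup
  have gmem : ∀ i, g i ∈ 𝒳 := fun i => hsupmem _ (List.get_mem lst i)
  have gfest : ∀ i, IsFestoon (g i) := fun i => hfest _ (gmem i)
  have h𝒳eq : 𝒳 = Finset.image g Finset.univ := by
    ext Z
    constructor
    · intro hZ
      obtain ⟨i, hi, hgi⟩ := List.mem_iff_getElem.mp (hall Z hZ)
      exact Finset.mem_image.mpr ⟨⟨i, hi⟩, Finset.mem_univ _, by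
        rw [hg]; simp only [List.get_eq_getElem]; exact hgi⟩
    · intro hZ
      obtain ⟨i, -, rfl⟩ := Finset.mem_image.mp hZ
      exact gmem i
  have htan : ∀ (k : ℕ) (h2 : k + 1 < P), Tangled (g ⟨k, by omega⟩) (g ⟨k + 1, h2⟩) := by
    intro k h2
    exact List.isChain_iff_getElem.mp hchT k (by omega)
  have hg0 : g ⟨0, hP0⟩ = X0 := by
    rw [hg]; simp only [List.get_eq_getElem]
    rw [← List.head_eq_getElem_zero hne]; exact hhead
  have hglast : g ⟨P - 1, by omega⟩ = Xw := by
    rw [hg]; simp only [List.get_eq_getElem]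
    rw [← List.getLast_eq_getElem hne]; exact hlastXw
  -- uniqueness of the festoon incident to v
  have huniqv : ∀ (j : ℕ) (hj : j < P), (∃ ℓ ∈ g ⟨j, hj⟩, ℓ.Incident v) → j = 0 := by
    rintro j hj ⟨ℓj, hℓj, hinc⟩
    by_contra hj0
    set 𝒴 := Finset.image g (Finset.univ.filter (fun k : Fin P => j ≤ (k : ℕ))) with h𝒴
    have hss : 𝒴 ⊂ 𝒳 := by
      constructor
      · intro Z hZ
        obtain ⟨k, -, rfl⟩ := Finset.mem_image.mp hZ
        exact gmem k
      · intro hsup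
        have h0 : g ⟨0, hP0⟩ ∈ 𝒴 := hsup (gmem _)
        obtain ⟨k, hk, hk2⟩ := Finset.mem_image.mp h0
        have hke := ginj hk2
        rw [hke] at hk
        have := (Finset.mem_filter.mp hk).2
        simp at this; omega
    have hjmem : g ⟨j, hj⟩ ∈ 𝒴 :=
      Finset.mem_image_of_mem g (Finset.mem_filter.mpr ⟨Finset.mem_univ _, le_refl _⟩)
    have hPmem : g ⟨P - 1, by omega⟩ ∈ 𝒴 :=
      Finset.mem_image_of_mem g (Finset.mem_filter.mpr ⟨Finset.mem_univ _, by simp; omega⟩)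
    refine hmin 𝒴 hss ⟨w, hwgood, ℓj, mem_biUnion_of hjmem hℓj, f0,
      mem_biUnion_of (by rwa [hglast] at hPmem) hf0Xw, hinc, hf0w, ?_⟩
    have hidx : (⟨j + (P - 1 - j), by omega⟩ : Fin P) = ⟨P - 1, by omega⟩ :=
      fin_mk_eq _ _ (by omega)
    refine conn_seg gfest htan 𝒴 (P - 1 - j) j (by omega) ?_ ℓj hℓj f0 ?_
    · intro k hk hk1 hk2
      exact Finset.mem_image_of_mem g (Finset.mem_filter.mpr ⟨Finset.mem_univ _, by simp; omega⟩)
    · rw [hidx, hglast]; exact hf0Xw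
  -- uniqueness of the festoon with a good endpoint
  have huniqg : ∀ (j : ℕ) (hj : j < P),
      (∃ ℓ ∈ g ⟨j, hj⟩, ∃ u : Fin (n + 3), ℓ.Incident u ∧ VGood F v u) → j = P - 1 := by
    rintro j hj ⟨ℓj, hℓj, u, hincu, hugood⟩
    by_contra hjP
    set 𝒴 := Finset.image g (Finset.univ.filter (fun k : Fin P => (k : ℕ) ≤ j)) with h𝒴
    have hss : 𝒴 ⊂ 𝒳 := by
      constructor
      · intro Z hZ
        obtain ⟨k, -, rfl⟩ := Finset.mem_image.mp hZ
        exact gmem k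
      · intro hsup
        have h0 : g ⟨P - 1, by omega⟩ ∈ 𝒴 := hsup (gmem _)
        obtain ⟨k, hk, hk2⟩ := Finset.mem_image.mp h0
        have hke := ginj hk2
        rw [hke] at hk
        have := (Finset.mem_filter.mp hk).2
        simp at this; omega
    have hjmem : g ⟨j, hj⟩ ∈ 𝒴 :=
      Finset.mem_image_of_mem g (Finset.mem_filter.mpr ⟨Finset.mem_univ _, le_refl _⟩)
    have h0mem : g ⟨0, hP0⟩ ∈ 𝒴 :=
      Finset.mem_image_of_mem g (Finset.mem_filter.mpr ⟨Finset.mem_univ _, by simp⟩)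
    refine hmin 𝒴 hss ⟨u, hugood, ℓ0, mem_biUnion_of (by rwa [hg0] at h0mem) hℓ0X0,
      ℓj, mem_biUnion_of hjmem hℓj, hℓ0v, hincu, ?_⟩
    have hidx : (⟨0 + j, by omega⟩ : Fin P) = ⟨j, hj⟩ := fin_mk_eq _ _ (by omega)
    refine conn_seg gfest htan 𝒴 j 0 (by omega) ?_ ℓ0 ?_ ℓj ?_
    · intro k hk hk1 hk2
      exact Finset.mem_image_of_mem g (Finset.mem_filter.mpr ⟨Finset.mem_univ _, by simp; omega⟩)
    · rw [hg0]; exact hℓ0X0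
    · rw [hidx]; exact hℓj
  -- no chords
  have hnochord : ∀ (i j : ℕ) (hi : i < P) (hj : j < P), i + 1 < j →
      ¬ Tangled (g ⟨i, hi⟩) (g ⟨j, hj⟩) := by
    intro i j hi hj hij htang
    obtain ⟨x, hx, y, hy, hint⟩ := htang
    set 𝒴 := Finset.image g
      (Finset.univ.filter (fun k : Fin P => (k : ℕ) ≤ i ∨ j ≤ (k : ℕ))) with h𝒴
    have hss : 𝒴 ⊂ 𝒳 := by
      constructor
      · intro Z hZ
        obtain ⟨k, -, rfl⟩ := Finset.mem_image.mp hZ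
        exact gmem k
      · intro hsup
        have h0 : g ⟨i + 1, by omega⟩ ∈ 𝒴 := hsup (gmem _)
        obtain ⟨k, hk, hk2⟩ := Finset.mem_image.mp h0
        have hke := ginj hk2
        rw [hke] at hk
        have := (Finset.mem_filter.mp hk).2
        simp at this; omega
    have hmem1 : ∀ (k : ℕ) (hk : k < P), 0 ≤ k → k ≤ 0 + i → g ⟨k, hk⟩ ∈ 𝒴 := by
      intro k hk hk1 hk2
      exact Finset.mem_image_of_mem g (Finset.mem_filter.mpr ⟨Finset.mem_univ _, by simp; omega⟩)
    have hmem2 : ∀ (k : ℕ) (hk : k < P), j ≤ k → k ≤ j + (P - 1 - j) → g ⟨k, hk⟩ ∈ 𝒴 := by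
      intro k hk hk1 hk2
      exact Finset.mem_image_of_mem g
        (Finset.mem_filter.mpr ⟨Finset.mem_univ _, by simp; omega⟩)
    have himem : g ⟨i, hi⟩ ∈ 𝒴 :=
      Finset.mem_image_of_mem g (Finset.mem_filter.mpr ⟨Finset.mem_univ _, by simp⟩)
    have hjmem : g ⟨j, hj⟩ ∈ 𝒴 :=
      Finset.mem_image_of_mem g (Finset.mem_filter.mpr ⟨Finset.mem_univ _, by simp⟩)
    have h0mem : g ⟨0, hP0⟩ ∈ 𝒴 :=
      Finset.mem_image_of_mem g (Finset.mem_filter.mpr ⟨Finset.mem_univ _, by simp⟩)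
    have hPmem : g ⟨P - 1, by omega⟩ ∈ 𝒴 :=
      Finset.mem_image_of_mem g (Finset.mem_filter.mpr ⟨Finset.mem_univ _, by simp; omega⟩)
    have hidx1 : (⟨0 + i, by omega⟩ : Fin P) = ⟨i, hi⟩ := fin_mk_eq _ _ (by omega)
    have hidx2 : (⟨j + (P - 1 - j), by omega⟩ : Fin P) = ⟨P - 1, by omega⟩ :=
      fin_mk_eq _ _ (by omega)
    have h1 := conn_seg gfest htan 𝒴 i 0 (by omega) hmem1 ℓ0 (by rw [hg0]; exact hℓ0X0)
      x (by rw [hidx1]; exact hx)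
    have h2 := conn_seg gfest htan 𝒴 (P - 1 - j) j (by omega) hmem2 y hy
      f0 (by rw [hidx2, hglast]; exact hf0Xw)
    refine hmin 𝒴 hss ⟨w, hwgood, ℓ0, mem_biUnion_of (by rwa [hg0] at h0mem) hℓ0X0,
      f0, mem_biUnion_of (by rwa [hglast] at hPmem) hf0Xw, hℓ0v, hf0w, ?_⟩
    exact (h1.tail ⟨mem_biUnion_of himem hx, mem_biUnion_of hjmem hy, hint⟩).trans h2
  -- all endpoints below the top festoon are bad
  have hbad : ∀ (j : ℕ) (hj : j < P), j ≠ P - 1 →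
      ∀ ℓ ∈ g ⟨j, hj⟩, ∀ u : Fin (n + 3), ℓ.Incident u → Descend F v u := by
    intro j hj hjne ℓ hℓ u hincu
    by_contra hdesc
    exact hjne (huniqg j hj ⟨ℓ, hℓ, u, hincu, hdesc⟩)
  -- base case of the interval chain
  have hbase : 2 ≤ P →
      festoonIval (g ⟨P - 2, by omega⟩) ⊂ festoonIval (g ⟨P - 1, by omega⟩) := by
    intro hP2
    obtain ⟨q, hq, fy, hfy, hYe⟩ := gfest ⟨P - 2, by omega⟩
    have hmemY : ∀ i : Fin q, fy i ∈ g ⟨P - 2, by omega⟩ := by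
      intro i; rw [hYe]; exact Finset.mem_image_of_mem _ (Finset.mem_univ _)
    have hlam1 : Descend F v (fy ⟨0, hq⟩).lo :=
      hbad (P - 2) (by omega) (by omega) _ (hmemY _) _ (Or.inl rfl)
    have hlam2 : Descend F v (fy ⟨q - 1, by omega⟩).hi :=
      hbad (P - 2) (by omega) (by omega) _ (hmemY _) _ (Or.inr rfl)
    have hwY : w ∉ festoonIval (g ⟨P - 2, by omega⟩) := by
      intro hwmem
      rw [hYe, ival_eq hfy hq] at hwmem
      exact hwgood (desc_interval hF hlam1 hlam2 hwmem.1 hwmem.2)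
    have hwX : w ∈ festoonIval (g ⟨P - 1, by omega⟩) := by
      rw [hglast]; exact incident_mem_ival hf0Xw hf0w
    have hidx : (⟨P - 2 + 1, by omega⟩ : Fin P) = ⟨P - 1, by omega⟩ := fin_mk_eq _ _ (by omega)
    have htang : Tangled (g ⟨P - 2, by omega⟩) (g ⟨P - 1, by omega⟩) := by
      rw [← hidx]; exact htan (P - 2) (by omega)
    obtain ⟨tpt, htY, htX⟩ := tangled_ival htang
    rcases hlam _ (gmem ⟨P - 2, by omega⟩) _ (gmem ⟨P - 1, by omega⟩) with hs | hs | hd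
    · exact ssubset_iff_subset_ne.mpr ⟨hs, fun he => hwY (he ▸ hwX)⟩
    · exact absurd (hs hwX) hwY
    · exfalso
      have : tpt ∈ festoonIval (g ⟨P - 2, by omega⟩) ∩ festoonIval (g ⟨P - 1, by omega⟩) :=
        ⟨htY, htX⟩
      rw [hd] at this
      exact this
  -- downward induction step
  have hstep : ∀ (i : ℕ) (h : i + 2 < P),
      festoonIval (g ⟨i + 1, by omega⟩) ⊂ festoonIval (g ⟨i + 2, h⟩) →
      festoonIval (g ⟨i, by omega⟩) ⊂ festoonIval (g ⟨i + 1, by omega⟩) := by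
    intro i h IH
    have hAB : Tangled (g ⟨i + 1, by omega⟩) (g ⟨i, by omega⟩) :=
      tangled_symm (htan i (by omega))
    have hAC : Tangled (g ⟨i + 1, by omega⟩) (g ⟨i + 2, h⟩) := by
      exact htan (i + 1) (by omega)
    have hnBC : ¬ Tangled (g ⟨i, by omega⟩) (g ⟨i + 2, h⟩) :=
      hnochord i (i + 2) (by omega) h (by omega)
    have hlamBC := hlam _ (gmem ⟨i, by omega⟩) _ (gmem ⟨i + 2, h⟩)
    have htriple : ¬ (festoonIval (g ⟨i + 1, by omega⟩) ⊆ festoonIval (g ⟨i, by omega⟩)) :=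
      fun hc => triple (gfest _) (gfest _) (gfest _) hAB hAC hnBC hlamBC hc IH.subset
    rcases hlam _ (gmem ⟨i, by omega⟩) _ (gmem ⟨i + 1, by omega⟩) with hs | hs | hd
    · refine ssubset_iff_subset_ne.mpr ⟨hs, fun he => htriple ?_⟩
      rw [he]
    · exact absurd hs htriple
    · exfalso
      obtain ⟨tpt, ht1, ht2⟩ := tangled_ival (htan i (by omega))
      have : tpt ∈ festoonIval (g ⟨i, by omega⟩) ∩ festoonIval (g ⟨i + 1, by omega⟩) :=
        ⟨ht1, ht2⟩
      rw [hd] at this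
      exact this
  -- full consecutive chain
  have hconsec : ∀ (i : ℕ) (h : i + 1 < P),
      festoonIval (g ⟨i, by omega⟩) ⊂ festoonIval (g ⟨i + 1, h⟩) := by
    have key : ∀ (t : ℕ) (hP2 : 2 ≤ P) (ht : t ≤ P - 2),
        festoonIval (g ⟨P - 2 - t, by omega⟩) ⊂ festoonIval (g ⟨P - 2 - t + 1, by omega⟩) := by
      intro t
      induction t with
      | zero =>
        intro hP2 ht
        have hidx1 : (⟨P - 2 - 0, by omega⟩ : Fin P) = ⟨P - 2, by omega⟩ :=
          fin_mk_eq _ _ (by omega)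
        have hidx2 : (⟨P - 2 - 0 + 1, by omega⟩ : Fin P) = ⟨P - 1, by omega⟩ :=
          fin_mk_eq _ _ (by omega)
        rw [hidx1, hidx2]
        exact hbase hP2
      | succ t ih =>
        intro hP2 ht
        have ih2 := ih hP2 (by omega)
        have hidx1 : (⟨P - 2 - t, by omega⟩ : Fin P) = ⟨P - 2 - (t + 1) + 1, by omega⟩ :=
          fin_mk_eq _ _ (by omega)
        have hidx2 : (⟨P - 2 - t + 1, by omega⟩ : Fin P) = ⟨P - 2 - (t + 1) + 2, by omega⟩ :=
          fin_mk_eq _ _ (by omega)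
        rw [hidx1, hidx2] at ih2
        exact hstep (P - 2 - (t + 1)) (by omega) ih2
    intro i h
    have hP2 : 2 ≤ P := by omega
    have hkey := key (P - 2 - i) hP2 (by omega)
    have hidx1 : (⟨P - 2 - (P - 2 - i), by omega⟩ : Fin P) = ⟨i, by omega⟩ :=
      fin_mk_eq _ _ (by omega)
    have hidx2 : (⟨P - 2 - (P - 2 - i) + 1, by omega⟩ : Fin P) = ⟨i + 1, h⟩ :=
      fin_mk_eq _ _ (by omega)
    rwa [hidx1, hidx2] at hkey
  -- monotone chain
  have hmono : ∀ i j : Fin P, i < j → festoonIval (g i) ⊂ festoonIval (g j) := by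
    have key : ∀ (d i : ℕ) (hi : i < P) (hid : i + d + 1 < P),
        festoonIval (g ⟨i, hi⟩) ⊂ festoonIval (g ⟨i + d + 1, hid⟩) := by
      intro d
      induction d with
      | zero =>
        intro i hi hid
        exact hconsec i (by omega)
      | succ d ih =>
        intro i hi hid
        have h1 := ih i hi (by omega)
        have h2 := hconsec (i + d + 1) (by omega)
        have hidx : (⟨i + d + 1 + 1, by omega⟩ : Fin P) = ⟨i + (d + 1) + 1, hid⟩ :=
          fin_mk_eq _ _ (by omega)
        rw [hidx] at h2
        exact h1.trans h2
    intro i j hij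
    have h1 : (i : ℕ) + ((j : ℕ) - (i : ℕ) - 1) + 1 = (j : ℕ) := by
      rw [Fin.lt_def] at hij; omega
    have := key ((j : ℕ) - (i : ℕ) - 1) (i : ℕ) i.isLt (by omega)
    have hidx1 : (⟨(i : ℕ), i.isLt⟩ : Fin P) = i := rfl
    have hidx2 : (⟨(i : ℕ) + ((j : ℕ) - (i : ℕ) - 1) + 1, by omega⟩ : Fin P) = j :=
      fin_cast_eq j (by omega) _
    rwa [hidx1, hidx2] at this
  refine ⟨P, g, h𝒳eq, hmono, ?_, ?_, ?_⟩
  · -- tangled iff consecutive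
    intro i j hij
    constructor
    · intro ht
      by_contra hcon
      push_neg at hcon
      obtain ⟨h1, h2⟩ := hcon
      rcases lt_or_gt_of_ne hij with hlt | hlt
      · have hlt' : (i : ℕ) + 1 < (j : ℕ) := by have h3 := Fin.lt_def.mp hlt; omega
        exact hnochord (i : ℕ) (j : ℕ) i.isLt j.isLt hlt' ht
      · have hlt' : (j : ℕ) + 1 < (i : ℕ) := by have h3 := Fin.lt_def.mp hlt; omega
        exact hnochord (j : ℕ) (i : ℕ) j.isLt i.isLt hlt' (tangled_symm ht)
    · intro hc
      rcases hc with hc | hc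
      · have := htan (i : ℕ) (by omega)
        have hidx : (⟨(i : ℕ) + 1, by omega⟩ : Fin P) = j := fin_cast_eq j hc _
        rwa [hidx, show (⟨(i : ℕ), by omega⟩ : Fin P) = i from rfl] at this
      · have := htan (j : ℕ) (by omega)
        have hidx : (⟨(j : ℕ) + 1, by omega⟩ : Fin P) = i := fin_cast_eq i hc _
        rw [hidx, show (⟨(j : ℕ), by omega⟩ : Fin P) = j from rfl] at this
        exact tangled_symm this
  · -- incident to v iff first
    intro i
    constructor
    · intro hex
      exact huniqv (i : ℕ) i.isLt (by
        rwa [show (⟨(i : ℕ), i.isLt⟩ : Fin P) = i from rfl])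
    · intro h0
      have : i = ⟨0, hP0⟩ := Fin.ext h0
      rw [this, hg0]
      exact ⟨ℓ0, hℓ0X0, hℓ0v⟩
  · -- good endpoint iff last
    intro i
    constructor
    · intro hex
      exact huniqg (i : ℕ) i.isLt (by
        rwa [show (⟨(i : ℕ), i.isLt⟩ : Fin P) = i from rfl])
    · intro h0
      have : i = ⟨P - 1, by omega⟩ := Fin.ext h0
      rw [this, hglast]
      exact ⟨f0, hf0Xw, w, hf0w, hwgood⟩
end

section
/- Let (G, L, c, r, e_r) be a rooted WRAP instance that admits a WRAP solution, and let OPT ⊆ L be a WRAP solution of minimum cost. Then there exists a non-shortenable directed WRAP solution F⃗ ⊆ shadows(L) with c(F⃗) ≤ 2 · c(OPT), where the cost of a directed link ℓ⃗ ∈ shadows(L) is c(ℓ⃗) := min{c(ℓ) : ℓ ∈ L and ℓ⃗ is a shadow of ℓ} and c(F⃗) := Σ_{ℓ⃗ ∈ F⃗} c(ℓ⃗). -/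
variable {n : ℕ}

/- ## Auxiliary machinery for Statement 18 -/

/-- The "length" of a directed link along the path. -/
def dlen (d : DLink n) : ℕ := (d.head.1 - d.tail.1) + (d.tail.1 - d.head.1)

lemma one_le_dlen (d : DLink n) : 1 ≤ dlen d := by
  have : d.tail.1 ≠ d.head.1 := fun h => d.ne (Fin.val_injective h)
  unfold dlen; omega

lemma shadow_of_shortening {d' d : DLink n} {ℓ : Link n}
    (hs : IsShadow d ℓ) (h : IsShortening d' d) : IsShadow d' ℓ := by
  obtain ⟨hh, h1, h2⟩ := hs
  obtain ⟨hh', h1', h2'⟩ := h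
  have hlo : ℓ.lo ≤ d.head := by
    rcases hh with h | h
    · exact le_of_eq h.symm
    · exact h ▸ le_of_lt ℓ.lo_lt_hi
  have hhi : d.head ≤ ℓ.hi := by
    rcases hh with h | h
    · exact h ▸ le_of_lt ℓ.lo_lt_hi
    · exact le_of_eq h
  exact ⟨hh' ▸ hh, le_trans (le_min h1 hlo) h1', le_trans h2' (max_le h2 hhi)⟩

lemma dlen_lt_of_strict_shortening {d' d : DLink n}
    (h : IsShortening d' d) (hne : d' ≠ d) : dlen d' < dlen d := by
  obtain ⟨hh, h1, h2⟩ := h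
  have htne : d'.tail ≠ d.tail := by
    intro ht
    apply hne
    cases d'; cases d
    simp_all
  have hv : d'.tail.1 ≠ d.tail.1 := fun h => htne (Fin.val_injective h)
  have hv2 : d'.tail.1 ≠ d'.head.1 := fun h => d'.ne (Fin.val_injective h)
  have hhv : d'.head.1 = d.head.1 := by rw [hh]
  rcases le_total d.tail d.head with hcse | hcse
  · rw [min_eq_left hcse] at h1
    rw [max_eq_right hcse] at h2
    have e1 : d.tail.1 ≤ d'.tail.1 := Fin.le_def.1 h1
    have e2 : d'.tail.1 ≤ d.head.1 := Fin.le_def.1 h2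
    have e3 : d.tail.1 ≤ d.head.1 := Fin.le_def.1 hcse
    unfold dlen; omega
  · rw [min_eq_right hcse] at h1
    rw [max_eq_left hcse] at h2
    have e1 : d.head.1 ≤ d'.tail.1 := Fin.le_def.1 h1
    have e2 : d'.tail.1 ≤ d.tail.1 := Fin.le_def.1 h2
    have e3 : d.head.1 ≤ d.tail.1 := Fin.le_def.1 hcse
    unfold dlen; omega

/-- The cost of a directed link. -/
noncomputable def dcost (L : Finset (Link n)) (c : Link n → ℝ) (d : DLink n) : ℝ :=
  sInf {x : ℝ | ∃ ℓ ∈ L, IsShadow d ℓ ∧ c ℓ = x}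

lemma dcost_bddBelow {L : Finset (Link n)} {c : Link n → ℝ}
    (hc : ∀ ℓ ∈ L, 0 ≤ c ℓ) (d : DLink n) :
    BddBelow {x : ℝ | ∃ ℓ ∈ L, IsShadow d ℓ ∧ c ℓ = x} := by
  refine ⟨0, ?_⟩
  rintro x ⟨ℓ, hl, -, rfl⟩
  exact hc ℓ hl

lemma dcost_nonneg {L : Finset (Link n)} {c : Link n → ℝ}
    (hc : ∀ ℓ ∈ L, 0 ≤ c ℓ) (d : DLink n) : 0 ≤ dcost L c d := by
  apply Real.sInf_nonneg
  rintro x ⟨ℓ, hl, -, rfl⟩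
  exact hc ℓ hl

lemma dcost_le {L : Finset (Link n)} {c : Link n → ℝ}
    (hc : ∀ ℓ ∈ L, 0 ≤ c ℓ) {d : DLink n} {ℓ : Link n}
    (hl : ℓ ∈ L) (hs : IsShadow d ℓ) : dcost L c d ≤ c ℓ :=
  csInf_le (dcost_bddBelow hc d) ⟨ℓ, hl, hs, rfl⟩

lemma dcost_shorten_le {L : Finset (Link n)} {c : Link n → ℝ}
    (hc : ∀ ℓ ∈ L, 0 ≤ c ℓ) {d' d : DLink n}
    (h : IsShortening d' d) (hw : ∃ ℓ ∈ L, IsShadow d ℓ) :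
    dcost L c d' ≤ dcost L c d := by
  obtain ⟨ℓ, hl, hs⟩ := hw
  refine csInf_le_csInf (dcost_bddBelow hc d') ⟨c ℓ, ℓ, hl, hs, rfl⟩ ?_
  rintro x ⟨f, hf, hsf, rfl⟩
  exact ⟨f, hf, shadow_of_shortening hsf h, rfl⟩

lemma shrink [NeZero n] (L : Finset (Link n)) (c : Link n → ℝ)
    (hc : ∀ ℓ ∈ L, 0 ≤ c ℓ) :
    ∀ N : ℕ, ∀ F : Finset (DLink n), (∑ d ∈ F, dlen d) ≤ N →
      (∀ d ∈ F, ∃ ℓ ∈ L, IsShadow d ℓ) → IsDirSolution F →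
      ∃ F' : Finset (DLink n), (∀ d ∈ F', ∃ ℓ ∈ L, IsShadow d ℓ) ∧ NonShortenable F' ∧
        ∑ d ∈ F', dcost L c d ≤ ∑ d ∈ F, dcost L c d := by
  intro N
  induction N using Nat.strong_induction_on with
  | _ N IH =>
    intro F hμ hsh hsol
    by_cases h1 : ∃ d ∈ F, IsDirSolution (F.erase d)
    · obtain ⟨d, hd, hsol'⟩ := h1
      have hsum := Finset.sum_erase_add F dlen hd
      have hμ' : ∑ x ∈ F.erase d, dlen x < N := by
        have := one_le_dlen d
        omega
      obtain ⟨F', a, b, cle⟩ := IH _ hμ' (F.erase d) le_rfl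
        (fun x hx => hsh x (Finset.mem_of_mem_erase hx)) hsol'
      refine ⟨F', a, b, cle.trans ?_⟩
      have hce := Finset.sum_erase_add F (dcost L c) hd
      have h0 := dcost_nonneg hc d
      linarith
    · by_cases h2 : ∃ d ∈ F, ∃ d' : DLink n, IsShortening d' d ∧ d' ≠ d ∧
          IsDirSolution (insert d' (F.erase d))
      · obtain ⟨d, hd, d', hsc, hne, hsol'⟩ := h2
        have hsum := Finset.sum_erase_add F dlen hd
        have hcsum := Finset.sum_erase_add F (dcost L c) hd
        have hdl := dlen_lt_of_strict_shortening hsc hne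
        have hcl := dcost_shorten_le hc hsc (hsh d hd)
        have hsh' : ∀ x ∈ insert d' (F.erase d), ∃ ℓ ∈ L, IsShadow x ℓ := by
          intro x hx
          rcases Finset.mem_insert.1 hx with rfl | hx
          · obtain ⟨ℓ, hl, hs⟩ := hsh d hd
            exact ⟨ℓ, hl, shadow_of_shortening hs hsc⟩
          · exact hsh x (Finset.mem_of_mem_erase hx)
        have key : (∑ x ∈ insert d' (F.erase d), dlen x < N) ∧
            (∑ x ∈ insert d' (F.erase d), dcost L c x ≤ ∑ x ∈ F, dcost L c x) := by
          by_cases hm : d' ∈ F.erase d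
          · rw [Finset.insert_eq_self.2 hm]
            have h0 := dcost_nonneg hc d
            constructor
            · omega
            · linarith
          · rw [Finset.sum_insert hm, Finset.sum_insert hm]
            constructor
            · omega
            · linarith
        obtain ⟨F', a, b, cle⟩ := IH _ key.1 (insert d' (F.erase d)) le_rfl hsh' hsol'
        exact ⟨F', a, b, cle.trans key.2⟩
      · push_neg at h1 h2
        refine ⟨F, hsh, ⟨hsol, h1, ?_⟩, le_rfl⟩
        intro d hd d' hs hne
        exact h2 d hd d' hs hne

/-- if the rooted WRAP instance admits a solution and `OPT`
is a minimum-cost WRAP solution, then there is a non-shortenable directed WRAP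
solution `F ⊆ shadows(L)` with `c(F) ≤ 2 · c(OPT)`, where the cost of a
directed link `d ∈ shadows(L)` is `min {c(ℓ) : ℓ ∈ L, d is a shadow of ℓ}`. -/
theorem cheap_nonshortenable_directed_solution {n : ℕ}
    (L : Finset (Link (n + 3))) (c : Link (n + 3) → ℝ)
    (hc : ∀ ℓ ∈ L, 0 ≤ c ℓ)
    (OPT : Finset (Link (n + 3))) (hOPTL : OPT ⊆ L) (hOPT : IsSolution OPT)
    (hmin : ∀ S : Finset (Link (n + 3)), S ⊆ L → IsSolution S →
      ∑ ℓ ∈ OPT, c ℓ ≤ ∑ ℓ ∈ S, c ℓ) :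
    ∃ F : Finset (DLink (n + 3)),
      (∀ d ∈ F, ∃ ℓ ∈ L, IsShadow d ℓ) ∧ NonShortenable F ∧
      ∑ d ∈ F, sInf {x : ℝ | ∃ ℓ ∈ L, IsShadow d ℓ ∧ c ℓ = x} ≤
        2 * ∑ ℓ ∈ OPT, c ℓ := by
  classical
  set fwd : Link (n + 3) → DLink (n + 3) :=
    fun ℓ => ⟨ℓ.lo, ℓ.hi, ne_of_lt ℓ.lo_lt_hi⟩ with hfwd
  set bwd : Link (n + 3) → DLink (n + 3) :=
    fun ℓ => ⟨ℓ.hi, ℓ.lo, (ne_of_lt ℓ.lo_lt_hi).symm⟩ with hbwd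
  set F0 : Finset (DLink (n + 3)) := OPT.image fwd ∪ OPT.image bwd with hF0
  have hsh0 : ∀ d ∈ F0, ∃ ℓ ∈ L, IsShadow d ℓ := by
    intro d hd
    rw [hF0, Finset.mem_union] at hd
    rcases hd with hd | hd <;>
      (rw [Finset.mem_image] at hd; obtain ⟨ℓ, hl, rfl⟩ := hd)
    · exact ⟨ℓ, hOPTL hl, Or.inr rfl, le_refl _, le_of_lt ℓ.lo_lt_hi⟩
    · exact ⟨ℓ, hOPTL hl, Or.inl rfl, le_of_lt ℓ.lo_lt_hi, le_refl _⟩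
  have hsol0 : IsDirSolution F0 := by
    intro C hC
    obtain ⟨ℓ, hl⟩ := hOPT C hC
    rw [cutLinks, Finset.mem_filter] at hl
    obtain ⟨hlO, hcr⟩ := hl
    rcases hcr with ⟨hin, hout⟩ | ⟨hout, hin⟩
    · refine ⟨bwd ℓ, ?_, hout, hin⟩
      exact Finset.mem_union_right _ (Finset.mem_image_of_mem _ hlO)
    · refine ⟨fwd ℓ, ?_, hout, hin⟩
      exact Finset.mem_union_left _ (Finset.mem_image_of_mem _ hlO)
  have hdisj : Disjoint (OPT.image fwd) (OPT.image bwd) := by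
    rw [Finset.disjoint_left]
    rintro d hd1 hd2
    rw [Finset.mem_image] at hd1 hd2
    obtain ⟨a, -, rfl⟩ := hd1
    obtain ⟨b, -, hb⟩ := hd2
    rw [hfwd, hbwd] at hb
    simp only [DLink.mk.injEq] at hb
    have h3 := a.lo_lt_hi
    have h4 := b.lo_lt_hi
    rw [hb.1, hb.2] at h4
    exact absurd h3 (not_lt.2 h4.le)
  have hfwdinj : Set.InjOn fwd OPT := by
    intro a _ b _ hab
    rw [hfwd] at hab
    simp only [DLink.mk.injEq] at hab
    cases a; cases b; simp_all
  have hbwdinj : Set.InjOn bwd OPT := by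
    intro a _ b _ hab
    rw [hbwd] at hab
    simp only [DLink.mk.injEq] at hab
    cases a; cases b; simp_all
  have hcost0 : ∑ d ∈ F0, dcost L c d ≤ 2 * ∑ ℓ ∈ OPT, c ℓ := by
    rw [hF0, Finset.sum_union hdisj, Finset.sum_image hfwdinj, Finset.sum_image hbwdinj]
    have hf : ∑ ℓ ∈ OPT, dcost L c (fwd ℓ) ≤ ∑ ℓ ∈ OPT, c ℓ := by
      refine Finset.sum_le_sum fun ℓ hl => dcost_le hc (hOPTL hl) ?_
      exact ⟨Or.inr rfl, le_refl _, le_of_lt ℓ.lo_lt_hi⟩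
    have hb : ∑ ℓ ∈ OPT, dcost L c (bwd ℓ) ≤ ∑ ℓ ∈ OPT, c ℓ := by
      refine Finset.sum_le_sum fun ℓ hl => dcost_le hc (hOPTL hl) ?_
      exact ⟨Or.inl rfl, le_of_lt ℓ.lo_lt_hi, le_refl _⟩
    linarith
  obtain ⟨F', a, b, cle⟩ := shrink L c hc (∑ d ∈ F0, dlen d) F0 le_rfl hsh0 hsol0
  exact ⟨F', a, b, le_trans cle hcost0⟩
end

section
/- Let (G, L, c, r, e_r) be a rooted WRAP instance, let S̄ ⊆ L be a link set, and let X ⊆ S̄ be a festoon such that no festoon X'' ⊆ S̄ has a festoon interval strictly containing I_X. Then for every festoon Y ⊆ S̄, the festoon intervals I_X and I_Y do not cross, i.e., I_X ⊆ I_Y, I_Y ⊆ I_X, or I_X ∩ I_Y = ∅. -/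
variable {n : ℕ}

section Aux
variable {n : ℕ}

lemma not_intersects_of_hi_lt_lo {ℓ m : Link n} (h : ℓ.hi < m.lo) : ¬ Intersects ℓ m := by
  have h1 := ℓ.lo_lt_hi; have h2 := m.lo_lt_hi
  simp only [Intersects, Crossing, Fin.lt_def, Fin.le_def, Fin.ext_iff] at *
  omega

lemma intersects_of_between {ℓ m : Link n} (h1 : ℓ.lo < m.lo) (h2 : m.lo ≤ ℓ.hi)
    (h3 : ℓ.hi < m.hi) : Intersects ℓ m := by
  simp only [Intersects, Crossing, Fin.lt_def, Fin.le_def, Fin.ext_iff] at *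
  omega

lemma lo_le_hi_of_intersects {ℓ m : Link n} (h : Intersects ℓ m) (h1 : ℓ.lo < m.lo)
    (h2 : ℓ.hi < m.hi) : m.lo ≤ ℓ.hi := by
  have h3 := ℓ.lo_lt_hi; have h4 := m.lo_lt_hi
  simp only [Intersects, Crossing, Fin.lt_def, Fin.le_def, Fin.ext_iff] at *
  omega

lemma festoon_mono {p : ℕ} {f : Fin p → Link n} (hf : IsFestoonSeq f) {i j : Fin p}
    (hij : i ≤ j) : (f i).lo ≤ (f j).lo ∧ (f i).hi ≤ (f j).hi := by
  rcases lt_or_eq_of_le hij with h | h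
  · exact ⟨(hf.1 i j h).1.le, (hf.1 i j h).2.le⟩
  · subst h; exact ⟨le_rfl, le_rfl⟩

lemma festoonIval_image {N : ℕ} (hN : 0 < N) (h : Fin N → Link n) (hh : IsFestoonSeq h) :
    festoonIval (Finset.image h Finset.univ) =
      Set.Icc (h ⟨0, hN⟩).lo (h ⟨N - 1, Nat.sub_lt hN Nat.one_pos⟩).hi := by
  ext w
  simp only [festoonIval, Set.mem_Icc, Set.mem_setOf_eq, Finset.mem_image, Finset.mem_univ,
    true_and]
  constructor
  · rintro ⟨⟨ℓ, ⟨i, rfl⟩, hw1⟩, ⟨m, ⟨i', rfl⟩, hw2⟩⟩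
    refine ⟨le_trans (festoon_mono hh ?_).1 hw1, le_trans hw2 (festoon_mono hh ?_).2⟩
    · exact Fin.le_def.mpr (by simp only [Fin.val_mk]; omega)
    · exact Fin.le_def.mpr (by simp only [Fin.val_mk]; have := i'.isLt; omega)
  · rintro ⟨hw1, hw2⟩
    exact ⟨⟨_, ⟨⟨0, hN⟩, rfl⟩, hw1⟩, ⟨_, ⟨⟨N - 1, Nat.sub_lt hN Nat.one_pos⟩, rfl⟩, hw2⟩⟩

end Aux

section Join
variable {n : ℕ}

lemma lt_aux1 {a K p : ℕ} (h : a ≤ K) (hK : K < p) : a < p := Nat.lt_of_le_of_lt h hK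

lemma lt_aux2 {a K q J : ℕ} (hJ : J < q) (ha : a < K + 1 + (q - J)) :
    J + (a - (K + 1)) < q := by omega

/-- Concatenation of a prefix of `f` (up to index `K`) with a suffix of `g`
(from index `J` on). -/
def joinSeq {p q : ℕ} (f : Fin p → Link n) (g : Fin q → Link n) (K J : ℕ)
    (hK : K < p) (hJ : J < q) : Fin (K + 1 + (q - J)) → Link n := fun i =>
  if hi : (i : ℕ) ≤ K then f ⟨i, lt_aux1 hi hK⟩
  else g ⟨J + ((i : ℕ) - (K + 1)), lt_aux2 hJ i.isLt⟩

lemma joinSeq_le {p q : ℕ} (f : Fin p → Link n) (g : Fin q → Link n) {K J : ℕ}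
    (hK : K < p) (hJ : J < q) (i : Fin (K + 1 + (q - J))) (hi : (i : ℕ) ≤ K) :
    joinSeq f g K J hK hJ i = f ⟨i, lt_aux1 hi hK⟩ := dif_pos hi

lemma joinSeq_gt {p q : ℕ} (f : Fin p → Link n) (g : Fin q → Link n) {K J : ℕ}
    (hK : K < p) (hJ : J < q) (i : Fin (K + 1 + (q - J))) (hi : ¬ (i : ℕ) ≤ K) :
    joinSeq f g K J hK hJ i = g ⟨J + ((i : ℕ) - (K + 1)), lt_aux2 hJ i.isLt⟩ :=
  dif_neg hi

lemma join {p q : ℕ} (hp : 0 < p) (hq : 0 < q)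
    (f : Fin p → Link n) (g : Fin q → Link n)
    (hf : IsFestoonSeq f) (hg : IsFestoonSeq g)
    (h1 : (f ⟨0, hp⟩).lo < (g ⟨0, hq⟩).lo)
    (h2 : (g ⟨0, hq⟩).lo ≤ (f ⟨p - 1, Nat.sub_lt hp Nat.one_pos⟩).hi)
    (h3 : (f ⟨p - 1, Nat.sub_lt hp Nat.one_pos⟩).hi < (g ⟨q - 1, Nat.sub_lt hq Nat.one_pos⟩).hi) :
    ∃ Z : Finset (Link n), IsFestoon Z ∧
      (∀ ℓ ∈ Z, (∃ i, f i = ℓ) ∨ (∃ m, g m = ℓ)) ∧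
      festoonIval Z = Set.Icc (f ⟨0, hp⟩).lo (g ⟨q - 1, Nat.sub_lt hq Nat.one_pos⟩).hi := by
  classical
  have hpp : p - 1 < p := Nat.sub_lt hp Nat.one_pos
  have hqq : q - 1 < q := Nat.sub_lt hq Nat.one_pos
  have hfhi : ∀ i : Fin p, (f i).hi ≤ (f ⟨p - 1, hpp⟩).hi := fun i =>
    (festoon_mono hf (Fin.le_def.mpr (by simp only [Fin.val_mk]; have := i.isLt; omega))).2
  -- choice of J : maximal index with (g J).lo ≤ bX
  have hJex : ∃ J : Fin q, (g J).lo ≤ (f ⟨p - 1, hpp⟩).hi ∧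
      ∀ m : Fin q, (g m).lo ≤ (f ⟨p - 1, hpp⟩).hi → m ≤ J := by
    have hT0 : (⟨0, hq⟩ : Fin q) ∈
        Finset.univ.filter (fun m : Fin q => (g m).lo ≤ (f ⟨p - 1, hpp⟩).hi) := by
      simp only [Finset.mem_filter, Finset.mem_univ, true_and]; exact h2
    refine ⟨Finset.max' _ ⟨_, hT0⟩, ?_, fun m hm => Finset.le_max' _ m ?_⟩
    · have := Finset.max'_mem _ ⟨_, hT0⟩
      simpa only [Finset.mem_filter, Finset.mem_univ, true_and] using this
    · simp only [Finset.mem_filter, Finset.mem_univ, true_and]; exact hm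
  obtain ⟨J, hJlo, hJmax⟩ := hJex
  have hgtJ : ∀ m : Fin q, J < m → (f ⟨p - 1, hpp⟩).hi < (g m).lo := fun m hm =>
    lt_of_not_ge (fun hle => absurd (hJmax m hle) (not_le.mpr hm))
  have hJhi : (f ⟨p - 1, hpp⟩).hi < (g J).hi := by
    by_cases hJl : (J : ℕ) = q - 1
    · have : J = ⟨q - 1, hqq⟩ := Fin.ext hJl
      rw [this]; exact h3
    · have hJq1 : (J : ℕ) + 1 < q := by have := J.isLt; omega
      have hlt : J < (⟨(J : ℕ) + 1, hJq1⟩ : Fin q) := by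
        rw [Fin.lt_def]; simp only [Fin.val_mk]; omega
      have hint := hg.2.1 J ⟨(J : ℕ) + 1, hJq1⟩ (by simp only [Fin.val_mk])
      have := lo_le_hi_of_intersects hint (hg.1 _ _ hlt).1 (hg.1 _ _ hlt).2
      exact lt_of_lt_of_le (hgtJ _ hlt) this
  -- K0 : maximal index with (f K0).lo < (g J).lo
  have hK0ex : ∃ K0 : Fin p, (f K0).lo < (g J).lo ∧
      ∀ i : Fin p, (f i).lo < (g J).lo → i ≤ K0 := by
    have hT0 : (⟨0, hp⟩ : Fin p) ∈
        Finset.univ.filter (fun i : Fin p => (f i).lo < (g J).lo) := by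
      simp only [Finset.mem_filter, Finset.mem_univ, true_and]
      exact lt_of_lt_of_le h1
        (festoon_mono hg (Fin.le_def.mpr (by simp only [Fin.val_mk]; omega))).1
    refine ⟨Finset.max' _ ⟨_, hT0⟩, ?_, fun i hi => Finset.le_max' _ i ?_⟩
    · have := Finset.max'_mem _ ⟨_, hT0⟩
      simpa only [Finset.mem_filter, Finset.mem_univ, true_and] using this
    · simp only [Finset.mem_filter, Finset.mem_univ, true_and]; exact hi
  obtain ⟨K0, hK0lo, hK0max⟩ := hK0ex
  have hK0hi : (g J).lo ≤ (f K0).hi := by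
    by_cases hK0l : (K0 : ℕ) = p - 1
    · have : K0 = ⟨p - 1, hpp⟩ := Fin.ext hK0l
      rw [this]; exact hJlo
    · have hK0q1 : (K0 : ℕ) + 1 < p := by have := K0.isLt; omega
      have hlt : K0 < (⟨(K0 : ℕ) + 1, hK0q1⟩ : Fin p) := by
        rw [Fin.lt_def]; simp only [Fin.val_mk]; omega
      have hint := hf.2.1 K0 ⟨(K0 : ℕ) + 1, hK0q1⟩ (by simp only [Fin.val_mk])
      have hch := lo_le_hi_of_intersects hint (hf.1 _ _ hlt).1 (hf.1 _ _ hlt).2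
      have : ¬ (f ⟨(K0 : ℕ) + 1, hK0q1⟩).lo < (g J).lo := fun hcon =>
        absurd (hK0max _ hcon) (not_le.mpr hlt)
      exact le_trans (not_lt.mp this) hch
  have hK0int : Intersects (f K0) (g J) :=
    intersects_of_between hK0lo hK0hi (lt_of_le_of_lt (hfhi K0) hJhi)
  -- K : minimal index intersecting g J
  have hKex : ∃ K : Fin p, Intersects (f K) (g J) ∧
      ∀ i : Fin p, Intersects (f i) (g J) → K ≤ i := by
    have hT0 : K0 ∈ Finset.univ.filter (fun i : Fin p => Intersects (f i) (g J)) := by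
      simp only [Finset.mem_filter, Finset.mem_univ, true_and]; exact hK0int
    refine ⟨Finset.min' _ ⟨_, hT0⟩, ?_, fun i hi => Finset.min'_le _ i ?_⟩
    · have := Finset.min'_mem _ ⟨_, hT0⟩
      simpa only [Finset.mem_filter, Finset.mem_univ, true_and] using this
    · simp only [Finset.mem_filter, Finset.mem_univ, true_and]; exact hi
  obtain ⟨K, hKint, hKmin⟩ := hKex
  have hKK0 : K ≤ K0 := hKmin K0 hK0int
  have hKlo : (f K).lo < (g J).lo := lt_of_le_of_lt (festoon_mono hf hKK0).1 hK0lo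
  have hKnoint : ∀ i : Fin p, i < K → ¬ Intersects (f i) (g J) := fun i hi hint =>
    absurd (hKmin i hint) (not_le.mpr hi)
  -- the joined sequence
  have hKp : (K : ℕ) < p := K.isLt
  have hJq : (J : ℕ) < q := J.isLt
  have hN : 0 < (K : ℕ) + 1 + (q - (J : ℕ)) := by omega
  have hfeq : ∀ (i : Fin ((K : ℕ) + 1 + (q - (J : ℕ)))) (hi : (i : ℕ) ≤ (K : ℕ)),
      joinSeq f g (K : ℕ) (J : ℕ) hKp hJq i = f ⟨i, lt_aux1 hi hKp⟩ :=
    fun i hi => joinSeq_le f g hKp hJq i hi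
  have hgeq : ∀ (i : Fin ((K : ℕ) + 1 + (q - (J : ℕ)))) (hi : ¬ (i : ℕ) ≤ (K : ℕ)),
      joinSeq f g (K : ℕ) (J : ℕ) hKp hJq i =
        g ⟨(J : ℕ) + ((i : ℕ) - ((K : ℕ) + 1)), lt_aux2 hJq i.isLt⟩ :=
    fun i hi => joinSeq_gt f g hKp hJq i hi
  have hseq : IsFestoonSeq (joinSeq f g (K : ℕ) (J : ℕ) hKp hJq) := by
    refine ⟨?_, ?_, ?_⟩
    · intro i i' hlt
      have hlt' : (i : ℕ) < (i' : ℕ) := Fin.lt_def.mp hlt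
      by_cases hi' : (i' : ℕ) ≤ (K : ℕ)
      · have hi : (i : ℕ) ≤ (K : ℕ) := by omega
        rw [hfeq i hi, hfeq i' hi']
        exact hf.1 _ _ (by rw [Fin.lt_def]; simpa using hlt')
      · by_cases hi : (i : ℕ) ≤ (K : ℕ)
        · rw [hfeq i hi, hgeq i' hi']
          have hJle : J ≤ (⟨(J : ℕ) + ((i' : ℕ) - ((K : ℕ) + 1)),
              lt_aux2 hJq i'.isLt⟩ : Fin q) := by
            rw [Fin.le_def]; simp only [Fin.val_mk]; omega
          have hiK : (⟨(i : ℕ), lt_aux1 hi hKp⟩ : Fin p) ≤ K := by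
            rw [Fin.le_def]; simpa using hi
          constructor
          · exact lt_of_le_of_lt (festoon_mono hf hiK).1
              (lt_of_lt_of_le hKlo (festoon_mono hg hJle).1)
          · exact lt_of_le_of_lt (hfhi _) (lt_of_lt_of_le hJhi (festoon_mono hg hJle).2)
        · rw [hgeq i hi, hgeq i' hi']
          exact hg.1 _ _ (by rw [Fin.lt_def]; simp only [Fin.val_mk]; omega)
    · intro i i' heq
      by_cases hi' : (i' : ℕ) ≤ (K : ℕ)
      · have hi : (i : ℕ) ≤ (K : ℕ) := by omega
        rw [hfeq i hi, hfeq i' hi']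
        exact hf.2.1 _ _ (by simp only [Fin.val_mk]; omega)
      · by_cases hi : (i : ℕ) ≤ (K : ℕ)
        · have hiK : (i : ℕ) = (K : ℕ) := by omega
          rw [hfeq i hi, hgeq i' hi']
          have e1 : (⟨(i : ℕ), lt_aux1 hi hKp⟩ : Fin p) = K := Fin.ext hiK
          have e2 : (⟨(J : ℕ) + ((i' : ℕ) - ((K : ℕ) + 1)),
              lt_aux2 hJq i'.isLt⟩ : Fin q) = J :=
            Fin.ext (by simp only [Fin.val_mk]; omega)
          rw [e1, e2]; exact hKint
        · rw [hgeq i hi, hgeq i' hi']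
          exact hg.2.1 _ _ (by simp only [Fin.val_mk]; omega)
    · intro i i' hgap
      by_cases hi' : (i' : ℕ) ≤ (K : ℕ)
      · have hi : (i : ℕ) ≤ (K : ℕ) := by omega
        rw [hfeq i hi, hfeq i' hi']
        exact hf.2.2 _ _ (by simp only [Fin.val_mk]; omega)
      · by_cases hi : (i : ℕ) ≤ (K : ℕ)
        · rw [hfeq i hi, hgeq i' hi']
          by_cases hi'K : (i' : ℕ) = (K : ℕ) + 1
          · have e2 : (⟨(J : ℕ) + ((i' : ℕ) - ((K : ℕ) + 1)),
                lt_aux2 hJq i'.isLt⟩ : Fin q) = J :=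
              Fin.ext (by simp only [Fin.val_mk]; omega)
            rw [e2]
            exact hKnoint ⟨(i : ℕ), lt_aux1 hi hKp⟩
              (by rw [Fin.lt_def]; simp only [Fin.val_mk]; omega)
          · apply not_intersects_of_hi_lt_lo
            refine lt_of_le_of_lt (hfhi _) (hgtJ _ ?_)
            rw [Fin.lt_def]; simp only [Fin.val_mk]; omega
        · rw [hgeq i hi, hgeq i' hi']
          exact hg.2.2 _ _ (by simp only [Fin.val_mk]; omega)
  refine ⟨Finset.image (joinSeq f g (K : ℕ) (J : ℕ) hKp hJq) Finset.univ,
    ⟨(K : ℕ) + 1 + (q - (J : ℕ)), hN, _, hseq, rfl⟩, ?_, ?_⟩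
  · intro ℓ hℓ
    simp only [Finset.mem_image, Finset.mem_univ, true_and] at hℓ
    obtain ⟨i, rfl⟩ := hℓ
    by_cases hi : (i : ℕ) ≤ (K : ℕ)
    · exact Or.inl ⟨_, (hfeq i hi).symm⟩
    · exact Or.inr ⟨_, (hgeq i hi).symm⟩
  · rw [festoonIval_image hN _ hseq]
    have e0 : joinSeq f g (K : ℕ) (J : ℕ) hKp hJq ⟨0, hN⟩ = f ⟨0, hp⟩ := by
      rw [hfeq ⟨0, hN⟩ (by simp)]
    have eL : joinSeq f g (K : ℕ) (J : ℕ) hKp hJq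
        ⟨(K : ℕ) + 1 + (q - (J : ℕ)) - 1, Nat.sub_lt hN Nat.one_pos⟩ = g ⟨q - 1, hqq⟩ := by
      rw [hgeq ⟨(K : ℕ) + 1 + (q - (J : ℕ)) - 1, Nat.sub_lt hN Nat.one_pos⟩
        (by simp only [Fin.val_mk]; omega)]
      exact congrArg g (Fin.ext (by simp only [Fin.val_mk]; omega))
    rw [e0, eL]

end Join

/-- let `X ⊆ S̄` be a festoon such that no festoon contained
in `S̄` has a festoon interval strictly containing `I_X`.  Then for every
festoon `Y ⊆ S̄`, the intervals `I_X` and `I_Y` do not cross: they are nested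
or disjoint. -/
theorem maximal_festoon_interval_laminar {n : ℕ}
    (L : Finset (Link (n + 3))) (c : Link (n + 3) → ℝ)
    (Sbar : Finset (Link (n + 3))) (hSbarL : Sbar ⊆ L)
    (X : Finset (Link (n + 3))) (hX : IsFestoon X) (hXS : X ⊆ Sbar)
    (hmax : ∀ X'' : Finset (Link (n + 3)), X'' ⊆ Sbar → IsFestoon X'' →
      ¬ festoonIval X ⊂ festoonIval X'')
    (Y : Finset (Link (n + 3))) (hY : IsFestoon Y) (hYS : Y ⊆ Sbar) :
    festoonIval X ⊆ festoonIval Y ∨ festoonIval Y ⊆ festoonIval X ∨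
      festoonIval X ∩ festoonIval Y = ∅ := by
  obtain ⟨p, hp, f, hf, hXeq⟩ := hX
  obtain ⟨q, hq, g, hg, hYeq⟩ := hY
  have hIX : festoonIval X =
      Set.Icc (f ⟨0, hp⟩).lo (f ⟨p - 1, Nat.sub_lt hp Nat.one_pos⟩).hi := by
    rw [hXeq]; exact festoonIval_image hp f hf
  have hIY : festoonIval Y =
      Set.Icc (g ⟨0, hq⟩).lo (g ⟨q - 1, Nat.sub_lt hq Nat.one_pos⟩).hi := by
    rw [hYeq]; exact festoonIval_image hq g hg
  by_contra hcon
  push_neg at hcon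
  obtain ⟨hc1, hc2, hc3⟩ := hcon
  obtain ⟨w, hwX, hwY⟩ := hc3
  rw [hIX] at hwX
  rw [hIY] at hwY
  obtain ⟨hwX1, hwX2⟩ := Set.mem_Icc.mp hwX
  obtain ⟨hwY1, hwY2⟩ := Set.mem_Icc.mp hwY
  have hsub1 : ¬ ((g ⟨0, hq⟩).lo ≤ (f ⟨0, hp⟩).lo ∧
      (f ⟨p - 1, Nat.sub_lt hp Nat.one_pos⟩).hi ≤ (g ⟨q - 1, Nat.sub_lt hq Nat.one_pos⟩).hi) :=
    fun h => hc1 (by rw [hIX, hIY]; exact Set.Icc_subset_Icc h.1 h.2)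
  have hsub2 : ¬ ((f ⟨0, hp⟩).lo ≤ (g ⟨0, hq⟩).lo ∧
      (g ⟨q - 1, Nat.sub_lt hq Nat.one_pos⟩).hi ≤ (f ⟨p - 1, Nat.sub_lt hp Nat.one_pos⟩).hi) :=
    fun h => hc2 (by rw [hIX, hIY]; exact Set.Icc_subset_Icc h.1 h.2)
  rcases not_and_or.mp hsub1 with hA | hA <;> rcases not_and_or.mp hsub2 with hB | hB
  · exact absurd (not_le.mp hA).le hB
  · -- aX < aY and bX < bY : extend X to the right using Y
    obtain ⟨Z, hZfest, hZmem, hZiv⟩ := join hp hq f g hf hg (not_le.mp hA)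
      (le_trans hwY1 hwX2) (not_le.mp hB)
    refine hmax Z ?_ hZfest ?_
    · intro ℓ hℓ
      rcases hZmem ℓ hℓ with ⟨i, rfl⟩ | ⟨m, rfl⟩
      · exact hXS (by rw [hXeq]; exact Finset.mem_image_of_mem f (Finset.mem_univ i))
      · exact hYS (by rw [hYeq]; exact Finset.mem_image_of_mem g (Finset.mem_univ m))
    · rw [hIX, hZiv, ssubset_iff_subset_not_subset]
      refine ⟨Set.Icc_subset_Icc le_rfl (not_le.mp hB).le, fun hsup => ?_⟩
      have := hsup ⟨le_trans (le_trans hwX1 hwX2) (not_le.mp hB).le, le_rfl⟩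
      exact absurd this.2 hB
  · -- aY < aX and bY < bX : extend X to the left using Y
    obtain ⟨Z, hZfest, hZmem, hZiv⟩ := join hq hp g f hg hf (not_le.mp hB)
      (le_trans hwX1 hwY2) (not_le.mp hA)
    refine hmax Z ?_ hZfest ?_
    · intro ℓ hℓ
      rcases hZmem ℓ hℓ with ⟨m, rfl⟩ | ⟨i, rfl⟩
      · exact hYS (by rw [hYeq]; exact Finset.mem_image_of_mem g (Finset.mem_univ m))
      · exact hXS (by rw [hXeq]; exact Finset.mem_image_of_mem f (Finset.mem_univ i))
    · rw [hIX, hZiv, ssubset_iff_subset_not_subset]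
      refine ⟨Set.Icc_subset_Icc (not_le.mp hB).le le_rfl, fun hsup => ?_⟩
      have := hsup ⟨le_rfl, le_trans hwY1 hwX2⟩
      exact absurd this.1 hB
  · exact absurd (not_le.mp hA).le hB
end
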